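/- arXiv:1512.00079 — 4 statements merged into one kernel-verified Lean document; each statement's English description precedes it below -/
import Mathlib

section
/- Let n ≥ 1 and let N be a nontrivial normal subgroup of Houghton's group H_n. Then N ∩ FSym_n equals FAlt_n or N ∩ FSym_n equals FSym_n; in particular, N contains FAlt_n. -/
/-! ## Houghton's groups: basic setup -/

/-- The underlying set of Houghton's group: `n` rays of discrete points;
`(i, p)` is the point at position `p` on the ray `R_i`. -/
abbrev XH (n : ℕ) : Type := Fin n × ℕ

/-- `g` acts, outside a finite set, as the translation by `m i` on the ray `R_i`. -/
def HasTranslationVector {n : ℕ} (g : Equiv.Perm (XH n)) (m : Fin n → ℤ) : Prop :=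
  ∃ K : Finset (XH n), ∀ x : XH n, x ∉ K →
    (g x).1 = x.1 ∧ ((g x).2 : ℤ) = (x.2 : ℤ) + m x.1

/-- An eventual translation of `X_n`. -/
def IsEventualTranslation {n : ℕ} (g : Equiv.Perm (XH n)) : Prop :=
  ∃ m : Fin n → ℤ, HasTranslationVector g m

/-- Houghton's group `H_n`: the group of all eventual translations of `X_n`. -/
def Houghton (n : ℕ) : Subgroup (Equiv.Perm (XH n)) where
  carrier := {g | IsEventualTranslation g}
  one_mem' := ⟨0, ∅, fun x _ => by simp⟩
  mul_mem' := by
    rintro a b ⟨ma, Ka, hKa⟩ ⟨mb, Kb, hKb⟩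
    classical
    refine ⟨ma + mb, Kb ∪ Kb.image b ∪ Ka.image b.symm, fun x hx => ?_⟩
    simp only [Finset.mem_union, not_or] at hx
    have hxb : x ∉ Kb := hx.1.1
    have hbx : b x ∉ Ka := by
      intro hc
      exact hx.2 (Finset.mem_image.mpr ⟨b x, hc, b.symm_apply_apply x⟩)
    obtain ⟨hb1, hb2⟩ := hKb x hxb
    obtain ⟨ha1, ha2⟩ := hKa (b x) hbx
    refine ⟨?_, ?_⟩
    · show (a (b x)).1 = x.1
      rw [ha1, hb1]
    · show ((a (b x)).2 : ℤ) = (x.2 : ℤ) + (ma + mb) x.1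
      rw [ha2, hb1, hb2, Pi.add_apply]
      ring
  inv_mem' := by
    rintro a ⟨m, K, hK⟩
    classical
    refine ⟨-m, K.image a, fun x hx => ?_⟩
    have hy : a⁻¹ x ∉ K := by
      intro hc
      exact hx (Finset.mem_image.mpr ⟨a⁻¹ x, hc, a.apply_symm_apply x⟩)
    obtain ⟨e1, e2⟩ := hK _ hy
    rw [show a (a⁻¹ x) = x from a.apply_symm_apply x] at e1 e2
    refine ⟨e1.symm, ?_⟩
    rw [← e1] at e2
    rw [Pi.neg_apply]
    omega

/-- The subgroup of finitely supported permutations of `X_n`. -/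
def FSymSub (n : ℕ) : Subgroup (Equiv.Perm (XH n)) where
  carrier := {g | {x | g x ≠ x}.Finite}
  one_mem' := by simp
  mul_mem' := by
    intro a b ha hb
    apply Set.Finite.subset (ha.union hb)
    intro x hx
    by_cases h : b x = x
    · left
      show a x ≠ x
      simpa [Equiv.Perm.mul_apply, h] using hx
    · right; exact h
  inv_mem' := by
    intro a ha
    apply Set.Finite.subset ha
    intro x hx
    show a x ≠ x
    intro hc
    apply hx
    show a⁻¹ x = x
    conv_lhs => rw [← hc]
    exact a.symm_apply_apply x

/-- The subgroup of finitely supported even permutations of `X_n`: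
products of an even number of transpositions. -/
def FAltSub (n : ℕ) : Subgroup (Equiv.Perm (XH n)) where
  carrier := {g | ∃ l : List (Equiv.Perm (XH n)),
    (∀ τ ∈ l, τ.IsSwap) ∧ Even l.length ∧ l.prod = g}
  one_mem' := ⟨[], by simp, by simp, by simp⟩
  mul_mem' := by
    rintro a b ⟨la, hla, hea, rfl⟩ ⟨lb, hlb, heb, rfl⟩
    refine ⟨la ++ lb, ?_, ?_, List.prod_append⟩
    · intro τ hτ
      rcases List.mem_append.mp hτ with h | h
      exacts [hla τ h, hlb τ h]
    · simpa using hea.add heb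
  inv_mem' := by
    rintro a ⟨l, hl, he, rfl⟩
    refine ⟨(l.map fun x => x⁻¹).reverse, ?_, by simpa using he,
      (List.prod_inv_reverse l).symm⟩
    intro τ hτ
    rw [List.mem_reverse, List.mem_map] at hτ
    obtain ⟨σ, hσ, rfl⟩ := hτ
    obtain ⟨x, y, hxy, rfl⟩ := hl σ hσ
    exact ⟨x, y, hxy, by rw [Equiv.swap_inv]⟩

/-- `FSym_n` and `FAlt_n` viewed as subgroups of `H_n`. -/
def FSymIn (n : ℕ) : Subgroup (Houghton n) := (FSymSub n).comap (Houghton n).subtype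

def FAltIn (n : ℕ) : Subgroup (Houghton n) := (FAltSub n).comap (Houghton n).subtype

/-- The index of the first ray `R_1`. -/
def ray0 (n : ℕ) (hn : 0 < n) : Fin n := ⟨0, hn⟩

/-- The underlying function of the generator `g_i`. -/
def gFun (n : ℕ) (hn : 0 < n) (i : Fin n) : XH n → XH n := fun x =>
  if x.1 = ray0 n hn then (if x.2 = 0 then (i, 0) else (ray0 n hn, x.2 - 1))
  else if x.1 = i then (i, x.2 + 1) else x

/-- The inverse of `gFun`. -/
def gInvFun (n : ℕ) (hn : 0 < n) (i : Fin n) : XH n → XH n := fun x =>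
  if x.1 = i then (if x.2 = 0 then (ray0 n hn, 0) else (i, x.2 - 1))
  else if x.1 = ray0 n hn then (ray0 n hn, x.2 + 1) else x

/-- The generator `g_i` of `H_n` (as a permutation): it translates the first ray
down by one, sends `(1,1)` to `(i,1)` and translates the ray `R_i` up by one. -/
def gGen (n : ℕ) (hn : 0 < n) (i : Fin n) (hi : i ≠ ray0 n hn) : Equiv.Perm (XH n) where
  toFun := gFun n hn i
  invFun := gInvFun n hn i
  left_inv := by
    rintro ⟨j, p⟩
    show gInvFun n hn i (gFun n hn i (j, p)) = (j, p)
    simp only [gFun, gInvFun]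
    split_ifs <;> simp_all [Prod.ext_iff] <;> omega
  right_inv := by
    rintro ⟨j, p⟩
    show gFun n hn i (gInvFun n hn i (j, p)) = (j, p)
    simp only [gFun, gInvFun]
    split_ifs <;> simp_all [Prod.ext_iff] <;> omega

/-- The translation vector of `g_i`. -/
def gVec (n : ℕ) (hn : 0 < n) (i : Fin n) : Fin n → ℤ :=
  fun j => if j = ray0 n hn then -1 else if j = i then 1 else 0

theorem gGen_mem (n : ℕ) (hn : 0 < n) (i : Fin n) (hi : i ≠ ray0 n hn) :
    gGen n hn i hi ∈ Houghton n := by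
  refine ⟨gVec n hn i, {(ray0 n hn, 0)}, ?_⟩
  rintro ⟨j, p⟩ hx
  rw [Finset.mem_singleton] at hx
  have hx' : j ≠ ray0 n hn ∨ p ≠ 0 := by
    by_contra h
    push_neg at h
    exact hx (by rw [h.1, h.2])
  show (gFun n hn i (j, p)).1 = j ∧ ((gFun n hn i (j, p)).2 : ℤ) = (p : ℤ) + gVec n hn i j
  simp only [gFun, gVec]
  split_ifs <;> simp_all [Prod.ext_iff] <;> omega

/-- The generator `g_i` as an element of `H_n`. -/
def hGen (n : ℕ) (hn : 0 < n) (i : Fin n) (hi : i ≠ ray0 n hn) : Houghton n :=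
  ⟨gGen n hn i hi, gGen_mem n hn i hi⟩

/-- The transposition `α` exchanging `(1,1)` and `(1,2)`. -/
def alphaPerm (n : ℕ) (hn : 0 < n) : Equiv.Perm (XH n) :=
  Equiv.swap (ray0 n hn, 0) (ray0 n hn, 1)

theorem alphaPerm_mem (n : ℕ) (hn : 0 < n) : alphaPerm n hn ∈ Houghton n := by
  refine ⟨0, {(ray0 n hn, 0), (ray0 n hn, 1)}, ?_⟩
  intro x hx
  simp only [Finset.mem_insert, Finset.mem_singleton, not_or] at hx
  rw [show alphaPerm n hn x = x from Equiv.swap_apply_of_ne_of_ne hx.1 hx.2]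
  simp

/-- `α` as an element of `H_n`. -/
def hAlpha (n : ℕ) (hn : 0 < n) : Houghton n := ⟨alphaPerm n hn, alphaPerm_mem n hn⟩

theorem alphaPerm_mem_FSym (n : ℕ) (hn : 0 < n) : alphaPerm n hn ∈ FSymSub n := by
  show {x | alphaPerm n hn x ≠ x}.Finite
  apply Set.Finite.subset ((Set.finite_singleton (ray0 n hn, 1)).insert (ray0 n hn, 0))
  intro x hx
  by_contra hc
  simp only [Set.mem_insert_iff, Set.mem_singleton_iff, not_or] at hc
  exact hx (Equiv.swap_apply_of_ne_of_ne hc.1 hc.2)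

theorem swap_mem_houghton {n : ℕ} (P Q : XH n) : Equiv.swap P Q ∈ Houghton n := by
  classical
  refine ⟨0, {P, Q}, ?_⟩
  intro x hx
  simp only [Finset.mem_insert, Finset.mem_singleton, not_or] at hx
  rw [Equiv.swap_apply_of_ne_of_ne hx.1 hx.2]
  simp

/-- The transposition exchanging two points, as an element of `H_n`. -/
def hSwap {n : ℕ} (P Q : XH n) : Houghton n := ⟨Equiv.swap P Q, swap_mem_houghton P Q⟩

/-- The set of generators `{g_2, …, g_n}` of `H_n`. -/
def houghtonGensOnly (n : ℕ) (hn : 0 < n) : Set (Houghton n) :=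
  {x | ∃ (i : Fin n) (hi : i ≠ ray0 n hn), x = hGen n hn i hi}

/-- The chosen generating set of `H_n`: `{g_2, …, g_n}` for `n ≠ 2`,
and `{g_2, α}` for `n = 2`. -/
def houghtonGenSet (n : ℕ) (hn : 0 < n) : Set (Houghton n) :=
  if n = 2 then houghtonGensOnly n hn ∪ {hAlpha n hn} else houghtonGensOnly n hn

/-- Word length with respect to a set of generators (and their inverses). -/
noncomputable def wordLength {G : Type*} [Group G] (S : Set G) (g : G) : ℕ :=
  sInf {k | ∃ l : List G, (∀ x ∈ l, x ∈ S ∨ x⁻¹ ∈ S) ∧ l.length = k ∧ l.prod = g}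

/-- The growth rate of an endomorphism `φ`:
`GR(φ) = sup_g limsup_k |φ^k(g)|^{1/k}`. -/
noncomputable def growthRate {G : Type*} [Group G] (S : Set G) (φ : G →* G) : ℝ :=
  ⨆ g : G, Filter.limsup
    (fun k : ℕ => (wordLength S ((⇑φ)^[k] g) : ℝ) ^ (1 / (k : ℝ))) Filter.atTop

/-- The orbit of `x` under the permutation `h`. -/
def permOrbit {α : Type*} (h : Equiv.Perm α) (x : α) : Set α :=
  Set.range (fun k : ℤ => (h ^ k) x)

/-- `x` has infinite orbit under `h` (`x` is an essential point of `h`). -/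
def InfiniteOrbit {α : Type*} (h : Equiv.Perm α) (x : α) : Prop :=
  (permOrbit h x).Infinite

/-- The image `φ(g_i)` as a permutation of `X_n`. -/
def imageGen {n : ℕ} (h0 : 0 < n) (φ : Houghton n →* Houghton n)
    (i : Fin n) (hi : i ≠ ray0 n h0) : Equiv.Perm (XH n) :=
  ↑(φ (hGen n h0 i hi))

/-- The image `φ(α)` as a permutation of `X_n`. -/
def imageAlpha {n : ℕ} (h0 : 0 < n) (φ : Houghton n →* Houghton n) : Equiv.Perm (XH n) :=
  ↑(φ (hAlpha n h0))

/-- A transposition-orbit of an involution: a pair `{x, h x}` with `h x ≠ x`. -/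
def TOrbit {Ω : Type*} (h : Equiv.Perm Ω) (T : Set Ω) : Prop :=
  ∃ x, h x ≠ x ∧ T = {x, h x}

/-- The zero-sum vectors in `ℤ^n`. -/
def zeroSum (n : ℕ) : AddSubgroup (Fin n → ℤ) where
  carrier := {m | ∑ j, m j = 0}
  zero_mem' := by simp
  add_mem' := by
    intro a b ha hb
    simp only [Set.mem_setOf_eq] at *
    simp [Finset.sum_add_distrib, ha, hb]
  neg_mem' := by
    intro a ha
    simp only [Set.mem_setOf_eq] at *
    simp [ha]

/-! ### Auxiliary development for Statement 4 -/

section Aux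

theorem Equiv.Perm.apply_inv_self {α : Type*} (f : Equiv.Perm α) (x : α) : f (f⁻¹ x) = x :=
  Equiv.apply_symm_apply f x

theorem Equiv.Perm.inv_apply_self {α : Type*} (f : Equiv.Perm α) (x : α) : f⁻¹ (f x) = x :=
  Equiv.symm_apply_apply f x

variable {n : ℕ}

/-- Decomposition of a finitely supported permutation into a product of swaps. -/
private lemma exists_swap_list_aux {α : Type*} [DecidableEq α] :
    ∀ (k : ℕ) (g : Equiv.Perm α) (hg : {x | g x ≠ x}.Finite), hg.toFinset.card ≤ k →
      ∃ l : List (Equiv.Perm α), (∀ τ ∈ l, τ.IsSwap) ∧ l.prod = g := by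
  intro k
  induction k with
  | zero =>
    intro g hg hcard
    have hg1 : g = 1 := by
      ext x
      by_contra hx
      have hmem : x ∈ hg.toFinset := by simpa using hx
      have := Finset.card_pos.mpr ⟨x, hmem⟩
      omega
    exact ⟨[], by simp, by simp [hg1]⟩
  | succ k ih =>
    intro g hg hcard
    by_cases h1 : g = 1
    · exact ⟨[], by simp, by simp [h1]⟩
    · obtain ⟨x, hx⟩ : ∃ x, g x ≠ x := by
        by_contra h
        push_neg at h
        exact h1 (Equiv.ext h)
      set g' := Equiv.swap x (g x) * g with hg'def
      have hsub : {y | g' y ≠ y} ⊆ {y | g y ≠ y} := by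
        intro y hy
        simp only [Set.mem_setOf_eq, hg'def, Equiv.Perm.mul_apply] at hy ⊢
        intro hgy
        apply hy
        rw [hgy]
        apply Equiv.swap_apply_of_ne_of_ne
        · rintro rfl; exact hx hgy
        · rintro rfl; exact hx (g.injective hgy)
      have hg' : {y | g' y ≠ y}.Finite := hg.subset hsub
      have hx' : g' x = x := by
        simp only [hg'def, Equiv.Perm.mul_apply]
        exact Equiv.swap_apply_right x (g x)
      have hsub2 : hg'.toFinset ⊆ hg.toFinset.erase x := by
        intro y hy
        rw [Set.Finite.mem_toFinset] at hy
        rw [Finset.mem_erase, Set.Finite.mem_toFinset]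
        refine ⟨?_, hsub hy⟩
        rintro rfl
        exact hy hx'
      have hxmem : x ∈ hg.toFinset := by simpa using hx
      have hcard' : hg'.toFinset.card ≤ k := by
        have h1 := Finset.card_le_card hsub2
        have h2 := Finset.card_erase_of_mem hxmem
        omega
      obtain ⟨l, hl, hp⟩ := ih g' hg' hcard'
      refine ⟨Equiv.swap x (g x) :: l, ?_, ?_⟩
      · intro τ hτ
        rcases List.mem_cons.mp hτ with rfl | h
        · exact ⟨x, g x, Ne.symm hx, rfl⟩
        · exact hl τ h
      · rw [List.prod_cons, hp, hg'def, ← mul_assoc, Equiv.swap_mul_self, one_mul]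

private lemma exists_swap_list {α : Type*} [DecidableEq α] (g : Equiv.Perm α)
    (hg : {x | g x ≠ x}.Finite) :
    ∃ l : List (Equiv.Perm α), (∀ τ ∈ l, τ.IsSwap) ∧ l.prod = g :=
  exists_swap_list_aux hg.toFinset.card g hg le_rfl

private lemma hSwap_comm (P Q : XH n) : hSwap P Q = hSwap Q P :=
  Subtype.ext (Equiv.swap_comm P Q)

private lemma hSwap_inv (P Q : XH n) : (hSwap P Q)⁻¹ = hSwap P Q :=
  Subtype.ext (Equiv.swap_inv P Q)

private lemma hSwap_mul_self (P Q : XH n) : hSwap P Q * hSwap P Q = 1 :=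
  Subtype.ext (Equiv.swap_mul_self P Q)

private lemma hSwap_conj (g : Houghton n) (P Q : XH n) :
    g * hSwap P Q * g⁻¹
      = hSwap ((g : Equiv.Perm (XH n)) P) ((g : Equiv.Perm (XH n)) Q) :=
  Subtype.ext (Equiv.swap_apply_apply (g : Equiv.Perm (XH n)) P Q).symm

/-- The 3-cycle `a ↦ b ↦ c ↦ a` as an element of `H_n`. -/
private def cyc (a b c : XH n) : Houghton n := hSwap a c * hSwap a b

private lemma cyc_conj (g : Houghton n) (a b c : XH n) :
    g * cyc a b c * g⁻¹
      = cyc ((g : Equiv.Perm (XH n)) a) ((g : Equiv.Perm (XH n)) b)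
          ((g : Equiv.Perm (XH n)) c) := by
  have h : g * cyc a b c * g⁻¹ = (g * hSwap a c * g⁻¹) * (g * hSwap a b * g⁻¹) := by
    simp only [cyc]; group
  rw [h, hSwap_conj, hSwap_conj]
  rfl

private lemma triple_map (a b c u v w : XH n)
    (hab : a ≠ b) (hac : a ≠ c) (hbc : b ≠ c)
    (hua : u ≠ a) (hub : u ≠ b) (huc : u ≠ c)
    (hva : v ≠ a) (hvb : v ≠ b) (hvc : v ≠ c)
    (hwa : w ≠ a) (hwb : w ≠ b) (hwc : w ≠ c)
    (huv : u ≠ v) (huw : u ≠ w) (hvw : v ≠ w) :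
    ((hSwap a u * hSwap b v * hSwap c w : Houghton n) : Equiv.Perm (XH n)) a = u ∧
    ((hSwap a u * hSwap b v * hSwap c w : Houghton n) : Equiv.Perm (XH n)) b = v ∧
    ((hSwap a u * hSwap b v * hSwap c w : Houghton n) : Equiv.Perm (XH n)) c = w := by
  refine ⟨?_, ?_, ?_⟩
  · show Equiv.swap a u (Equiv.swap b v (Equiv.swap c w a)) = u
    rw [Equiv.swap_apply_of_ne_of_ne hac hwa.symm,
      Equiv.swap_apply_of_ne_of_ne hab hva.symm, Equiv.swap_apply_left]
  · show Equiv.swap a u (Equiv.swap b v (Equiv.swap c w b)) = v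
    rw [Equiv.swap_apply_of_ne_of_ne hbc hwb.symm, Equiv.swap_apply_left,
      Equiv.swap_apply_of_ne_of_ne hva huv.symm]
  · show Equiv.swap a u (Equiv.swap b v (Equiv.swap c w c)) = w
    rw [Equiv.swap_apply_left, Equiv.swap_apply_of_ne_of_ne hwb hvw.symm,
      Equiv.swap_apply_of_ne_of_ne hwa huw.symm]

/-- From one 3-cycle in a normal subgroup, get all 3-cycles. -/
private lemma cyc_mem_of_cyc_mem (hn : 0 < n) {N : Subgroup (Houghton n)} (hN : N.Normal)
    {a b c : XH n} (hab : a ≠ b) (hac : a ≠ c) (hbc : b ≠ c) (h : cyc a b c ∈ N) :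
    ∀ a' b' c' : XH n, a' ≠ b' → a' ≠ c' → b' ≠ c' → cyc a' b' c' ∈ N := by
  intro a' b' c' h1 h2 h3
  haveI : Nonempty (Fin n) := ⟨⟨0, hn⟩⟩
  classical
  obtain ⟨u, hu⟩ := Infinite.exists_notMem_finset ({a, b, c, a', b', c'} : Finset (XH n))
  obtain ⟨v, hv⟩ := Infinite.exists_notMem_finset ({a, b, c, a', b', c', u} : Finset (XH n))
  obtain ⟨w, hw⟩ := Infinite.exists_notMem_finset
    ({a, b, c, a', b', c', u, v} : Finset (XH n))
  simp only [Finset.mem_insert, Finset.mem_singleton, not_or] at hu hv hw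
  set π1 : Houghton n := hSwap a u * hSwap b v * hSwap c w with hπ1
  set π2 : Houghton n := hSwap a' u * hSwap b' v * hSwap c' w with hπ2
  obtain ⟨e1a, e1b, e1c⟩ := triple_map a b c u v w hab hac hbc
    hu.1 hu.2.1 hu.2.2.1 hv.1 hv.2.1 hv.2.2.1 hw.1 hw.2.1 hw.2.2.1
    (Ne.symm hv.2.2.2.2.2.2) (Ne.symm hw.2.2.2.2.2.2.1) (Ne.symm hw.2.2.2.2.2.2.2)
  obtain ⟨e2a, e2b, e2c⟩ := triple_map a' b' c' u v w h1 h2 h3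
    hu.2.2.2.1 hu.2.2.2.2.1 hu.2.2.2.2.2 hv.2.2.2.1 hv.2.2.2.2.1 hv.2.2.2.2.2.1
    hw.2.2.2.1 hw.2.2.2.2.1 hw.2.2.2.2.2.1
    (Ne.symm hv.2.2.2.2.2.2) (Ne.symm hw.2.2.2.2.2.2.1) (Ne.symm hw.2.2.2.2.2.2.2)
  set π : Houghton n := π2⁻¹ * π1 with hπ
  have ea : ((π : Houghton n) : Equiv.Perm (XH n)) a = a' := by
    show ((π2⁻¹ * π1 : Houghton n) : Equiv.Perm (XH n)) a = a'
    rw [Subgroup.coe_mul, Subgroup.coe_inv, Equiv.Perm.mul_apply, e1a, ← e2a]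
    exact Equiv.Perm.inv_apply_self _ _
  have eb : ((π : Houghton n) : Equiv.Perm (XH n)) b = b' := by
    show ((π2⁻¹ * π1 : Houghton n) : Equiv.Perm (XH n)) b = b'
    rw [Subgroup.coe_mul, Subgroup.coe_inv, Equiv.Perm.mul_apply, e1b, ← e2b]
    exact Equiv.Perm.inv_apply_self _ _
  have ec : ((π : Houghton n) : Equiv.Perm (XH n)) c = c' := by
    show ((π2⁻¹ * π1 : Houghton n) : Equiv.Perm (XH n)) c = c'
    rw [Subgroup.coe_mul, Subgroup.coe_inv, Equiv.Perm.mul_apply, e1c, ← e2c]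
    exact Equiv.Perm.inv_apply_self _ _
  have key : π * cyc a b c * π⁻¹ = cyc a' b' c' := by
    rw [cyc_conj, ea, eb, ec]
  rw [← key]
  exact hN.conj_mem _ h _

/-- A commutator of an element of `N` with a swap is a product of two swaps in `N`. -/
private lemma swapPair_mem {N : Subgroup (Houghton n)} (hN : N.Normal)
    {g : Houghton n} (hg : g ∈ N) (P Q : XH n) :
    hSwap ((g : Equiv.Perm (XH n)) P) ((g : Equiv.Perm (XH n)) Q) * hSwap P Q ∈ N := by
  have h1 : g * (hSwap P Q * g⁻¹ * (hSwap P Q)⁻¹) ∈ N :=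
    mul_mem hg (hN.conj_mem _ (inv_mem hg) _)
  have h2 : g * (hSwap P Q * g⁻¹ * (hSwap P Q)⁻¹)
      = (g * hSwap P Q * g⁻¹) * (hSwap P Q)⁻¹ := by group
  rw [h2, hSwap_conj, hSwap_inv] at h1
  exact h1

/-- Swaps on disjoint pairs commute. -/
private lemma swap_commute {α : Type*} [DecidableEq α] {a b c d : α}
    (hca : c ≠ a) (hcb : c ≠ b) (hda : d ≠ a) (hdb : d ≠ b) :
    Equiv.swap a b * Equiv.swap c d = Equiv.swap c d * Equiv.swap a b := by
  have hdisj : (Equiv.swap a b).Disjoint (Equiv.swap c d) := by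
    intro x
    by_cases h1 : x = a
    · subst h1; right; exact Equiv.swap_apply_of_ne_of_ne hca.symm hda.symm
    · by_cases h2 : x = b
      · subst h2; right; exact Equiv.swap_apply_of_ne_of_ne hcb.symm hdb.symm
      · left; exact Equiv.swap_apply_of_ne_of_ne h1 h2
  exact hdisj.commute.eq

private lemma hSwap_commute {a b c d : XH n}
    (hca : c ≠ a) (hcb : c ≠ b) (hda : d ≠ a) (hdb : d ≠ b) :
    hSwap a b * hSwap c d = hSwap c d * hSwap a b :=
  Subtype.ext (swap_commute hca hcb hda hdb)

/-- A nontrivial normal subgroup contains some 3-cycle. -/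
private lemma exists_cyc_mem (hn : 0 < n) {N : Subgroup (Houghton n)} (hN : N.Normal)
    (hnt : N ≠ ⊥) :
    ∃ a b c : XH n, a ≠ b ∧ a ≠ c ∧ b ≠ c ∧ cyc a b c ∈ N := by
  classical
  haveI : Nonempty (Fin n) := ⟨⟨0, hn⟩⟩
  obtain ⟨⟨g, hgN⟩, hg1⟩ := Subgroup.ne_bot_iff_exists_ne_one.mp hnt
  have hg1' : g ≠ 1 := by
    intro h; exact hg1 (Subtype.ext h)
  obtain ⟨P, hP⟩ : ∃ P : XH n, (g : Equiv.Perm (XH n)) P ≠ P := by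
    by_contra h
    push_neg at h
    exact hg1' (Subtype.ext (Equiv.ext h))
  set gp : Equiv.Perm (XH n) := (g : Equiv.Perm (XH n)) with hgp
  by_cases h2 : gp (gp P) = P
  · -- `g` behaves like an involution at `P`
    obtain ⟨Q, hQ⟩ := Infinite.exists_notMem_finset ({P, gp P} : Finset (XH n))
    simp only [Finset.mem_insert, Finset.mem_singleton, not_or] at hQ
    have hσ : hSwap (gp P) (gp Q) * hSwap P Q ∈ N := swapPair_mem hN hgN P Q
    by_cases h3 : gp Q = Q
    · rw [h3] at hσ
      have e : hSwap (gp P) Q * hSwap P Q = cyc Q P (gp P) := by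
        rw [cyc, hSwap_comm Q (gp P), hSwap_comm Q P]
      rw [e] at hσ
      exact ⟨Q, P, gp P, hQ.1, hQ.2, Ne.symm hP, hσ⟩
    · -- double transposition case
      have hinv : gp⁻¹ P = gp P := gp.injective (by rw [Equiv.Perm.apply_inv_self, h2])
      have hQP : gp Q ≠ P := by
        intro h
        apply hQ.2
        have h' : Q = gp⁻¹ P := by rw [← h, Equiv.Perm.inv_apply_self]
        rw [h', hinv]
      have hQgP : gp Q ≠ gp P := fun h => hQ.1 (gp.injective h)
      -- σ = (gp P, gp Q)(P, Q), all four points distinct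
      -- conjugate by swap(P, e) with e fresh
      obtain ⟨e, he⟩ := Infinite.exists_notMem_finset
        ({P, Q, gp P, gp Q} : Finset (XH n))
      simp only [Finset.mem_insert, Finset.mem_singleton, not_or] at he
      set σ : Houghton n := hSwap (gp P) (gp Q) * hSwap P Q with hσdef
      have hτ : hSwap P e * σ * (hSwap P e)⁻¹ ∈ N := hN.conj_mem _ hσ _
      have hτeq : hSwap P e * σ * (hSwap P e)⁻¹
          = hSwap (gp P) (gp Q) * hSwap e Q := by
        have expand : hSwap P e * σ * (hSwap P e)⁻¹
            = (hSwap P e * hSwap (gp P) (gp Q) * (hSwap P e)⁻¹)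
              * (hSwap P e * hSwap P Q * (hSwap P e)⁻¹) := by
          simp only [hσdef]; group
        rw [expand, hSwap_conj, hSwap_conj]
        congr 1
        · congr 1
          · show Equiv.swap P e (gp P) = gp P
            exact Equiv.swap_apply_of_ne_of_ne hP (Ne.symm he.2.2.1)
          · show Equiv.swap P e (gp Q) = gp Q
            exact Equiv.swap_apply_of_ne_of_ne hQP (Ne.symm he.2.2.2)
        · congr 1
          · show Equiv.swap P e P = e
            exact Equiv.swap_apply_left P e
          · show Equiv.swap P e Q = Q
            exact Equiv.swap_apply_of_ne_of_ne hQ.1 (Ne.symm he.2.1)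
      rw [hτeq] at hτ
      have hprod : σ * (hSwap (gp P) (gp Q) * hSwap e Q) ∈ N := mul_mem hσ hτ
      have hcomm : hSwap P Q * hSwap (gp P) (gp Q)
          = hSwap (gp P) (gp Q) * hSwap P Q :=
        hSwap_commute hP (Ne.symm hQ.2) hQP h3
      have hpe : σ * (hSwap (gp P) (gp Q) * hSwap e Q) = cyc Q e P := by
        rw [hσdef]
        calc hSwap (gp P) (gp Q) * hSwap P Q * (hSwap (gp P) (gp Q) * hSwap e Q)
            = hSwap (gp P) (gp Q) * (hSwap P Q * hSwap (gp P) (gp Q)) * hSwap e Q := by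
              group
          _ = hSwap (gp P) (gp Q) * (hSwap (gp P) (gp Q) * hSwap P Q) * hSwap e Q := by
              rw [hcomm]
          _ = hSwap P Q * hSwap e Q := by
              rw [← mul_assoc, hSwap_mul_self, one_mul]
          _ = cyc Q e P := by
              rw [cyc, hSwap_comm Q P, hSwap_comm Q e]
      rw [hpe] at hprod
      exact ⟨Q, e, P, Ne.symm he.2.1, hQ.1, he.1, hprod⟩
  · -- g² P ≠ P : direct 3-cycle
    have hσ : hSwap (gp P) (gp (gp⁻¹ P)) * hSwap P (gp⁻¹ P) ∈ N :=
      swapPair_mem hN hgN P (gp⁻¹ P)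
    rw [Equiv.Perm.apply_inv_self] at hσ
    have e : hSwap (gp P) P * hSwap P (gp⁻¹ P) = cyc P (gp⁻¹ P) (gp P) := by
      rw [cyc, hSwap_comm P (gp P)]
    rw [e] at hσ
    refine ⟨P, gp⁻¹ P, gp P, ?_, Ne.symm hP, ?_, hσ⟩
    · intro h
      have h' : gp P = gp (gp⁻¹ P) := congrArg gp h
      rw [Equiv.Perm.apply_inv_self] at h'
      exact hP h'
    · intro h
      apply h2
      have h' := congrArg gp h
      rw [Equiv.Perm.apply_inv_self] at h'
      exact h'.symm

/-- Products of two swaps are in `N`. -/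
private lemma two_swap_mem (hn : 0 < n) {N : Subgroup (Houghton n)}
    (hcyc : ∀ a b c : XH n, a ≠ b → a ≠ c → b ≠ c → cyc a b c ∈ N)
    {P Q R S : XH n} (hPQ : P ≠ Q) (hRS : R ≠ S) :
    hSwap P Q * hSwap R S ∈ N := by
  by_cases h1 : P = R
  · subst h1
    by_cases h2 : Q = S
    · subst h2; rw [hSwap_mul_self]; exact one_mem N
    · have : hSwap P Q * hSwap P S = cyc P S Q := rfl
      rw [this]; exact hcyc P S Q hRS hPQ (Ne.symm h2)
  · by_cases h2 : P = S
    · subst h2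
      by_cases h3 : Q = R
      · subst h3
        rw [hSwap_comm Q P, hSwap_mul_self]; exact one_mem N
      · rw [hSwap_comm R P]
        have : hSwap P Q * hSwap P R = cyc P R Q := rfl
        rw [this]; exact hcyc P R Q h1 hPQ (Ne.symm h3)
    · by_cases h3 : Q = R
      · subst h3
        rw [hSwap_comm P Q]
        have : hSwap Q P * hSwap Q S = cyc Q S P := rfl
        rw [this]; exact hcyc Q S P hRS (Ne.symm hPQ) (Ne.symm h2)
      · by_cases h4 : Q = S
        · subst h4
          rw [hSwap_comm P Q, hSwap_comm R Q]
          have : hSwap Q P * hSwap Q R = cyc Q R P := rfl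
          rw [this]; exact hcyc Q R P (Ne.symm hRS) (Ne.symm hPQ) (Ne.symm h1)
        · -- all distinct
          have key : hSwap P Q * hSwap R S
              = (hSwap P Q * hSwap P R) * (hSwap P R * hSwap R S) := by
            rw [mul_assoc, ← mul_assoc (hSwap P R), hSwap_mul_self, one_mul]
          rw [key]
          have e1 : hSwap P Q * hSwap P R = cyc P R Q := rfl
          have e2 : hSwap P R * hSwap R S = cyc R S P := by
            rw [cyc, hSwap_comm R P]
          rw [e1, e2]
          exact mul_mem (hcyc P R Q h1 hPQ (fun h => h3 h.symm))
            (hcyc R S P hRS (fun h => h1 h.symm) (fun h => h2 h.symm))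

/-- Even products of swaps belong to `N`. -/
private lemma prod_swaps_mem {N : Subgroup (Houghton n)}
    (hcyc : ∀ a b c : XH n, a ≠ b → a ≠ c → b ≠ c → cyc a b c ∈ N)
    (htwo : ∀ {P Q R S : XH n}, P ≠ Q → R ≠ S → hSwap P Q * hSwap R S ∈ N) :
    ∀ (k : ℕ) (l : List (Equiv.Perm (XH n))), l.length ≤ k →
      (∀ τ ∈ l, τ.IsSwap) → Even l.length →
      ∀ g : Houghton n, (g : Equiv.Perm (XH n)) = l.prod → g ∈ N := by
  intro k
  induction k with
  | zero =>
    intro l hlen _ _ g hg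
    have hl : l = [] := List.eq_nil_of_length_eq_zero (by omega)
    subst hl
    have : g = 1 := Subtype.ext (by simpa using hg)
    rw [this]; exact one_mem N
  | succ k ih =>
    intro l hlen hsw he g hg
    match l, hlen, hsw, he, hg with
    | [], _, _, _, hg =>
      have : g = 1 := Subtype.ext (by simpa using hg)
      rw [this]; exact one_mem N
    | [τ], _, _, he, _ => simp at he
    | τ1 :: τ2 :: t, hlen, hsw, he, hg =>
      obtain ⟨x, y, hxy, h1⟩ := hsw τ1 List.mem_cons_self
      obtain ⟨z, w, hzw, h2⟩ := hsw τ2 (List.mem_cons.mpr (Or.inr List.mem_cons_self))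
      subst h1; subst h2
      have hu : hSwap x y * hSwap z w ∈ N := htwo hxy hzw
      set g' : Houghton n := (hSwap x y * hSwap z w)⁻¹ * g with hg'def
      have hg' : (g' : Equiv.Perm (XH n)) = t.prod := by
        simp only [hg'def, Subgroup.coe_mul, Subgroup.coe_inv, hg, List.prod_cons]
        show (Equiv.swap x y * Equiv.swap z w)⁻¹
            * (Equiv.swap x y * (Equiv.swap z w * t.prod)) = t.prod
        group
      have htsw : ∀ τ ∈ t, τ.IsSwap := fun τ hτ =>
        hsw τ (List.mem_cons.mpr (Or.inr (List.mem_cons.mpr (Or.inr hτ))))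
      have hte : Even t.length := by
        simp only [List.length_cons] at he
        rcases he with ⟨m, hm⟩
        exact ⟨m - 1, by omega⟩
      have htlen : t.length ≤ k := by
        simp only [List.length_cons] at hlen
        omega
      have hg'N : g' ∈ N := ih t htlen htsw hte g' hg'
      have : g = (hSwap x y * hSwap z w) * g' := by
        rw [hg'def]; group
      rw [this]
      exact mul_mem hu hg'N

/-- `FAlt_n ≤ FSym_n`. -/
private lemma FAltIn_le_FSymIn : FAltIn n ≤ FSymIn n := by
  intro g hg
  obtain ⟨l, hl, _, hp⟩ := hg
  show (g : Equiv.Perm (XH n)) ∈ FSymSub n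
  have hp' : (g : Equiv.Perm (XH n)) = l.prod := hp.symm
  rw [hp']
  refine list_prod_mem ?_
  intro τ hτ
  obtain ⟨x, y, hxy, rfl⟩ := hl τ hτ
  show {z | Equiv.swap x y z ≠ z}.Finite
  apply Set.Finite.subset ((Set.finite_singleton y).insert x)
  intro z hz
  by_contra hc
  simp only [Set.mem_insert_iff, Set.mem_singleton_iff, not_or] at hc
  exact hz (Equiv.swap_apply_of_ne_of_ne hc.1 hc.2)

/-- Key step: `FAlt_n ≤ N` for any nontrivial normal subgroup. -/
private lemma FAltIn_le_of_normal (hn : 0 < n) {N : Subgroup (Houghton n)}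
    (hN : N.Normal) (hnt : N ≠ ⊥) : FAltIn n ≤ N := by
  obtain ⟨a, b, c, h1, h2, h3, hc⟩ := exists_cyc_mem hn hN hnt
  have hcyc := cyc_mem_of_cyc_mem hn hN h1 h2 h3 hc
  have htwo : ∀ {P Q R S : XH n}, P ≠ Q → R ≠ S → hSwap P Q * hSwap R S ∈ N :=
    fun hPQ hRS => two_swap_mem hn hcyc hPQ hRS
  intro g hg
  obtain ⟨l, hl, he, hp⟩ := hg
  exact prod_swaps_mem hcyc htwo l.length l le_rfl hl he g hp.symm

end Aux

/-- For `n ≥ 1`, every nontrivial normal subgroup `N` of `H_n`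
satisfies `N ⊓ FSym_n = FAlt_n` or `N ⊓ FSym_n = FSym_n`; in particular
`FAlt_n ≤ N`. -/
theorem normal_subgroup_inter_FSym
    (n : ℕ) (hn : 1 ≤ n) (N : Subgroup (Houghton n)) (hN : N.Normal) (hnt : N ≠ ⊥) :
    (N ⊓ FSymIn n = FAltIn n ∨ N ⊓ FSymIn n = FSymIn n) ∧ FAltIn n ≤ N := by
  classical
  have hn0 : 0 < n := hn
  have hle : FAltIn n ≤ N := FAltIn_le_of_normal hn0 hN hnt
  have hAS : FAltIn n ≤ FSymIn n := FAltIn_le_FSymIn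
  have hAK : FAltIn n ≤ N ⊓ FSymIn n := le_inf hle hAS
  refine ⟨?_, hle⟩
  by_cases hK : N ⊓ FSymIn n ≤ FAltIn n
  · left; exact le_antisymm hK hAK
  · right
    refine le_antisymm inf_le_right ?_
    obtain ⟨g, hgK, hgA⟩ := SetLike.not_le_iff_exists.mp hK
    have hgS : (g : Equiv.Perm (XH n)) ∈ FSymSub n := hgK.2
    obtain ⟨lg, hlg, hpg⟩ := exists_swap_list (g : Equiv.Perm (XH n)) hgS
    have hog : ¬ Even lg.length := by
      intro heg
      exact hgA ⟨lg, hlg, heg, hpg⟩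
    intro h hh
    have hhS : (h : Equiv.Perm (XH n)) ∈ FSymSub n := hh
    obtain ⟨lh, hlh, hph⟩ := exists_swap_list (h : Equiv.Perm (XH n)) hhS
    by_cases heh : Even lh.length
    · exact hAK (show h ∈ FAltIn n from ⟨lh, hlh, heh, hph⟩)
    · -- both odd: h * g⁻¹ is even
      have hmem : h * g⁻¹ ∈ FAltIn n := by
        refine ⟨lh ++ (lg.map fun x => x⁻¹).reverse, ?_, ?_, ?_⟩
        · intro τ hτ
          rcases List.mem_append.mp hτ with hτ | hτ
          · exact hlh τ hτ
          · rw [List.mem_reverse, List.mem_map] at hτ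
            obtain ⟨σ, hσ, rfl⟩ := hτ
            obtain ⟨x, y, hxy, rfl⟩ := hlg σ hσ
            exact ⟨x, y, hxy, by rw [Equiv.swap_inv]⟩
        · rw [List.length_append, List.length_reverse, List.length_map]
          rcases Nat.odd_iff.mp (Nat.not_even_iff_odd.mp heh) with _
          rcases Nat.odd_iff.mp (Nat.not_even_iff_odd.mp hog) with _
          have h1 : Odd lh.length := Nat.not_even_iff_odd.mp heh
          have h2 : Odd lg.length := Nat.not_even_iff_odd.mp hog
          exact h1.add_odd h2
        · rw [List.prod_append, hph, ← List.prod_inv_reverse, hpg]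
          rfl
      have hfinal : (h * g⁻¹) * g ∈ N ⊓ FSymIn n := mul_mem (hAK hmem) hgK
      simpa using hfinal
end

section
/- For every n ≥ 1, Houghton's group H_n is not residually finite: there exists a nontrivial element g ∈ H_n such that for every normal subgroup N of H_n of finite index, g ∈ N (equivalently, every homomorphism from H_n to a finite group sends g to the identity). -/
lemma hSwap_coe {n : ℕ} (P Q : XH n) :
    ((hSwap P Q : Houghton n) : Equiv.Perm (XH n)) = Equiv.swap P Q := rfl

/-- `H_n` acts 3-transitively (via finitely supported permutations). -/
lemma exists_houghton_three {n : ℕ} (h0 : 0 < n) (x1 x2 x3 y1 y2 y3 : XH n)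
    (hx12 : x1 ≠ x2) (hx13 : x1 ≠ x3) (hx23 : x2 ≠ x3)
    (hy12 : y1 ≠ y2) (hy13 : y1 ≠ y3) (hy23 : y2 ≠ y3) :
    ∃ e : Houghton n, (e : Equiv.Perm (XH n)) x1 = y1 ∧
      (e : Equiv.Perm (XH n)) x2 = y2 ∧ (e : Equiv.Perm (XH n)) x3 = y3 := by
  classical
  set S : ℕ := x1.2 + x2.2 + x3.2 + y1.2 + y2.2 + y3.2 with hS
  set z : ℕ → XH n := fun t => (⟨0, h0⟩, S + 1 + t) with hz
  have key : ∀ (t : ℕ) (w : XH n), w.2 ≤ S → w ≠ z t := by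
    intro t w hw h
    have h2 := congrArg Prod.snd h
    simp only [hz] at h2
    omega
  have kz : ∀ s t : ℕ, s ≠ t → z s ≠ z t := by
    intro s t hst h
    have h2 := congrArg Prod.snd h
    simp only [hz] at h2
    omega
  have kx1 : ∀ t, x1 ≠ z t := fun t => key t x1 (by omega)
  have kx2 : ∀ t, x2 ≠ z t := fun t => key t x2 (by omega)
  have kx3 : ∀ t, x3 ≠ z t := fun t => key t x3 (by omega)
  have ky1 : ∀ t, y1 ≠ z t := fun t => key t y1 (by omega)
  have ky2 : ∀ t, y2 ≠ z t := fun t => key t y2 (by omega)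
  have ky3 : ∀ t, y3 ≠ z t := fun t => key t y3 (by omega)
  refine ⟨hSwap (z 0) y1 * hSwap (z 1) y2 * hSwap (z 2) y3 *
    hSwap x1 (z 0) * hSwap x2 (z 1) * hSwap x3 (z 2), ?_, ?_, ?_⟩
  · simp only [MulMemClass.coe_mul, hSwap_coe, Equiv.Perm.mul_apply]
    rw [Equiv.swap_apply_of_ne_of_ne hx13 (kx1 2),
      Equiv.swap_apply_of_ne_of_ne hx12 (kx1 1),
      Equiv.swap_apply_left,
      Equiv.swap_apply_of_ne_of_ne (kz 0 2 (by omega)) (Ne.symm (ky3 0)),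
      Equiv.swap_apply_of_ne_of_ne (kz 0 1 (by omega)) (Ne.symm (ky2 0)),
      Equiv.swap_apply_left]
  · simp only [MulMemClass.coe_mul, hSwap_coe, Equiv.Perm.mul_apply]
    rw [Equiv.swap_apply_of_ne_of_ne hx23 (kx2 2),
      Equiv.swap_apply_left,
      Equiv.swap_apply_of_ne_of_ne (Ne.symm (kx1 1)) (kz 1 0 (by omega)),
      Equiv.swap_apply_of_ne_of_ne (kz 1 2 (by omega)) (Ne.symm (ky3 1)),
      Equiv.swap_apply_left,
      Equiv.swap_apply_of_ne_of_ne (ky2 0) (Ne.symm hy12)]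
  · simp only [MulMemClass.coe_mul, hSwap_coe, Equiv.Perm.mul_apply]
    rw [Equiv.swap_apply_left,
      Equiv.swap_apply_of_ne_of_ne (Ne.symm (kx2 2)) (kz 2 1 (by omega)),
      Equiv.swap_apply_of_ne_of_ne (Ne.symm (kx1 2)) (kz 2 0 (by omega)),
      Equiv.swap_apply_left,
      Equiv.swap_apply_of_ne_of_ne (ky3 1) (Ne.symm hy23),
      Equiv.swap_apply_of_ne_of_ne (ky3 0) (Ne.symm hy13)]

/-- For every `n ≥ 1`, Houghton's group `H_n` is not residually
finite: there is a nontrivial element lying in every finite-index normal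
subgroup, equivalently killed by every homomorphism to a finite group. -/
theorem houghton_not_residually_finite (n : ℕ) (hn : 1 ≤ n) :
    ∃ g : Houghton n, g ≠ 1 ∧
      (∀ N : Subgroup (Houghton n), N.Normal → N.FiniteIndex → g ∈ N) ∧
      (∀ (H : Type) [Group H] [Finite H] (f : Houghton n →* H), f g = 1) := by
  classical
  have h0 : 0 < n := hn
  set P : ℕ → XH n := fun a => (⟨0, h0⟩, a) with hP
  have hPne : ∀ a b : ℕ, a ≠ b → P a ≠ P b := by
    intro a b hab h
    exact hab (congrArg Prod.snd h)
  set g : Houghton n := hSwap (P 0) (P 1) * hSwap (P 0) (P 2) with hg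
  have hmem : ∀ N : Subgroup (Houghton n), N.Normal → N.FiniteIndex → g ∈ N := by
    intro N hNorm hFI
    haveI : Finite (Houghton n ⧸ N) := Subgroup.finite_quotient_of_finiteIndex
    obtain ⟨j, k, hjk, hq⟩ := Finite.exists_ne_map_eq_of_infinite
      (fun m : ℕ => (QuotientGroup.mk (hSwap (P 0) (P (m + 1))) : Houghton n ⧸ N))
    rw [QuotientGroup.eq] at hq
    obtain ⟨e, he0, he1, he2⟩ := exists_houghton_three h0
      (P 0) (P (j + 1)) (P (k + 1)) (P 0) (P 1) (P 2)
      (hPne _ _ (by omega)) (hPne _ _ (by omega)) (hPne _ _ (by omega))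
      (hPne _ _ (by omega)) (hPne _ _ (by omega)) (hPne _ _ (by omega))
    have key : e * ((hSwap (P 0) (P (j + 1)))⁻¹ * hSwap (P 0) (P (k + 1))) * e⁻¹ = g := by
      apply Subtype.ext
      simp only [MulMemClass.coe_mul, InvMemClass.coe_inv, hSwap_coe, hg]
      rw [Equiv.swap_inv]
      conv_rhs => rw [← he0, ← he1, ← he2,
        Equiv.swap_apply_apply, Equiv.swap_apply_apply]
      group
    rw [← key]
    exact hNorm.conj_mem _ hq e
  have hgne : g ≠ 1 := by
    intro h
    have h2 := congrArg (fun x : Houghton n => (x : Equiv.Perm (XH n)) (P 2)) h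
    have h3 : (g : Equiv.Perm (XH n)) (P 2) = P 1 := by
      simp only [hg, MulMemClass.coe_mul, hSwap_coe, Equiv.Perm.mul_apply]
      rw [Equiv.swap_apply_right, Equiv.swap_apply_left]
    have h4 : (P 2 : XH n) = P 1 := by rw [← h3, h]; rfl
    exact hPne 2 1 (by omega) h4
  refine ⟨g, hgne, hmem, ?_⟩
  intro H _ _ f
  have hker : g ∈ f.ker := by
    refine hmem f.ker ?_ ?_
    · exact f.normal_ker
    · exact Subgroup.finiteIndex_ker f
  exact hker
end

section
/- For every n ≥ 1, the center of Houghton's group H_n is trivial. -/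
/-- For every `n ≥ 1`, the center of Houghton's group `H_n` is
trivial. -/
theorem houghton_center_eq_bot (n : ℕ) (hn : 1 ≤ n) :
    Subgroup.center (Houghton n) = ⊥ := by
  rw [Subgroup.eq_bot_iff_forall]
  intro g hg
  rw [Subgroup.mem_center_iff] at hg
  refine Subtype.ext (Equiv.ext fun x => ?_)
  show (g : Equiv.Perm (XH n)) x = x
  by_contra hne
  set p : Equiv.Perm (XH n) := (g : Equiv.Perm (XH n)) with hp
  set y : XH n := (x.1, x.2 + (p x).2 + 1) with hy
  have hyx : y ≠ x := by
    intro h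
    have := congrArg Prod.snd h
    simp only [hy] at this
    omega
  have hypx : y ≠ p x := by
    intro h
    rcases Prod.ext_iff.mp h with ⟨h1, h2⟩
    simp only [hy] at h2
    omega
  have hcomm := hg (hSwap x y)
  have hcomm' : Equiv.swap x y * p = p * Equiv.swap x y := by
    have := congrArg (Subtype.val) hcomm
    exact this
  have happ := congrFun (congrArg (fun e => (e : Equiv.Perm (XH n)).toFun) hcomm') x
  simp only [Equiv.Perm.mul_apply, Equiv.toFun_as_coe] at happ
  rw [Equiv.swap_apply_left] at happ
  rw [Equiv.swap_apply_of_ne_of_ne hne (fun h => hypx h.symm)] at happ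
  exact hyx (p.injective happ.symm)
end

section
/- Let n ≥ 2 and let φ : H_n → H_n be an injective group homomorphism. Then there exist a positive integer ℓ and an injective map δ : {1,…,n} → {1,…,n} such that for every i ∈ {2,…,n}, π(φ(g_i)) = ℓ·e_{δ(i)} − ℓ·e_{δ(1)}; that is, each φ(g_i) acts (off a finite set) as translation by −ℓ on the common source ray R_{δ(1)}, as translation by +ℓ on its target ray R_{δ(i)}, and as the identity translation on every other ray. In particular all φ(g_i) have the same unique source ray and pairwise distinct target rays. -/
namespace HAux

open Finset Equiv

variable {n : ℕ}

/-- `u` translates by `m j` on ray `j`, at all heights `> b`. -/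
def Tame (u : Equiv.Perm (XH n)) (m : Fin n → ℤ) (b : ℕ) : Prop :=
  ∀ j : Fin n, ∀ q : ℕ, b < q → (u (j, q)).1 = j ∧ ((u (j, q)).2 : ℤ) = (q : ℤ) + m j

def maxAbs (m : Fin n → ℤ) : ℕ := ∑ j, (m j).natAbs

lemma natAbs_le_maxAbs (m : Fin n → ℤ) (j : Fin n) : (m j).natAbs ≤ maxAbs m :=
  Finset.single_le_sum (f := fun j => (m j).natAbs) (fun _ _ => Nat.zero_le _) (mem_univ j)

lemma tame_of_htv {u : Equiv.Perm (XH n)} {m : Fin n → ℤ}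
    (h : HasTranslationVector u m) : ∃ b : ℕ, Tame u m b := by
  obtain ⟨K, hK⟩ := h
  refine ⟨K.sup (fun x => x.2), fun j q hq => ?_⟩
  have : (j, q) ∉ K := by
    intro hc
    have := Finset.le_sup (f := fun x : XH n => x.2) hc
    simp only at this
    omega
  exact hK _ this

lemma tame_mono {u : Equiv.Perm (XH n)} {m : Fin n → ℤ} {b b' : ℕ}
    (h : Tame u m b) (hb : b ≤ b') : Tame u m b' :=
  fun j q hq => h j q (by omega)

lemma tame_apply_eq {u : Equiv.Perm (XH n)} {m : Fin n → ℤ} {b : ℕ}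
    (h : Tame u m b) {j : Fin n} {q q' : ℕ} (hq : b < q) (hq' : (q' : ℤ) = (q : ℤ) + m j) :
    u (j, q) = (j, q') := by
  obtain ⟨h1, h2⟩ := h j q hq
  have : (u (j, q)).2 = q' := by exact_mod_cast h2.trans hq'.symm
  exact Prod.ext h1 this

lemma tame_inv {u : Equiv.Perm (XH n)} {m : Fin n → ℤ} {b : ℕ}
    (h : Tame u m b) : Tame u⁻¹ (-m) (b + maxAbs m) := by
  intro j q hq
  have habs := natAbs_le_maxAbs m j
  set q' : ℕ := ((q : ℤ) - m j).toNat with hq'def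
  have hq'cast : (q' : ℤ) = (q : ℤ) - m j := by omega
  have hq'b : b < q' := by omega
  have key : u (j, q') = (j, q) := tame_apply_eq h hq'b (by omega)
  have : u⁻¹ (j, q) = (j, q') := by
    rw [← key]; exact u.symm_apply_apply _
  rw [this]
  constructor
  · rfl
  · simp only [Pi.neg_apply]; omega

lemma tame_mul {u v : Equiv.Perm (XH n)} {m m' : Fin n → ℤ} {b b' : ℕ}
    (hu : Tame u m b) (hv : Tame v m' b') :
    Tame (u * v) (m + m') (b + b' + maxAbs m') := by
  intro j q hq
  have habs := natAbs_le_maxAbs m' j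
  set q' : ℕ := ((q : ℤ) + m' j).toNat with hq'def
  have hq'cast : (q' : ℤ) = (q : ℤ) + m' j := by omega
  have hv' : v (j, q) = (j, q') := tame_apply_eq hv (by omega) (by omega)
  have : (u * v) (j, q) = u (j, q') := by
    show u (v (j, q)) = _
    rw [hv']
  rw [this]
  obtain ⟨h1, h2⟩ := hu j q' (by omega)
  exact ⟨h1, by rw [h2]; simp only [Pi.add_apply]; omega⟩

lemma tame_unique {u : Equiv.Perm (XH n)} {m m' : Fin n → ℤ} {b b' : ℕ}
    (h : Tame u m b) (h' : Tame u m' b') : m = m' := by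
  funext j
  have h1 := (h j (max b b' + 1) (by omega)).2
  have h2 := (h' j (max b b' + 1) (by omega)).2
  omega

lemma tame_one : Tame (1 : Equiv.Perm (XH n)) 0 0 := by
  intro j q _
  exact ⟨rfl, by simp⟩

lemma tame_fix {u : Equiv.Perm (XH n)} {b : ℕ} (h : Tame u 0 b)
    {x : XH n} (hx : b < x.2) : u x = x := by
  obtain ⟨j, q⟩ := x
  exact tame_apply_eq h hx (by simp)

/-- An element of order dividing 3 with a translation vector has vector 0. -/
lemma tame_zero_of_cube {c : Equiv.Perm (XH n)} {m : Fin n → ℤ} {b : ℕ}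
    (h : Tame c m b) (hc : c ^ 3 = 1) : Tame c 0 b := by
  have h3 : c ^ 3 = c * (c * c) := by rw [pow_succ, pow_succ, pow_one, mul_assoc]
  have htm : Tame (c * (c * c)) (m + (m + m)) (b + (b + b + maxAbs m) + maxAbs (m + m)) :=
    tame_mul h (tame_mul h h)
  rw [← h3, hc] at htm
  have h0 : Tame (1 : Equiv.Perm (XH n)) 0 0 := tame_one
  have := tame_unique htm h0
  have hm : m = 0 := by
    funext j
    show m j = 0
    have h2 := congrFun this j
    simp only [Pi.add_apply, Pi.zero_apply] at h2
    omega
  rwa [hm] at h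

/-! ### Orbits -/

/-- `x` has infinite orbit under `u`. -/
def InfOrb (u : Equiv.Perm (XH n)) (x : XH n) : Prop :=
  ∀ N : ℕ, 1 ≤ N → (u ^ N) x ≠ x

lemma pow_fix {u : Equiv.Perm (XH n)} {x : XH n} (h : u x = x) (N : ℕ) : (u ^ N) x = x := by
  induction N with
  | zero => simp
  | succ k ih => rw [pow_succ']; show u ((u ^ k) x) = x; rw [ih, h]

lemma pow_fix_of_pow {u : Equiv.Perm (XH n)} {x : XH n} {a : ℕ} (h : (u ^ a) x = x) (b : ℕ) :
    (u ^ (a * b)) x = x := by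
  rw [pow_mul]; exact pow_fix h b

lemma infOrb_inv {u : Equiv.Perm (XH n)} {x : XH n} (h : InfOrb u x) : InfOrb u⁻¹ x := by
  intro N hN hc
  apply h N hN
  have : (u ^ N) ((u⁻¹ ^ N) x) = (u ^ N) x := by rw [hc]
  rw [inv_pow] at this
  simp only [Equiv.Perm.coe_inv, Equiv.apply_symm_apply] at this
  exact this.symm

lemma infOrb_inv_iff {u : Equiv.Perm (XH n)} {x : XH n} : InfOrb u⁻¹ x ↔ InfOrb u x := by
  constructor
  · intro h; simpa using infOrb_inv h
  · exact infOrb_inv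

lemma iterates_injective {u : Equiv.Perm (XH n)} {x : XH n} (h : InfOrb u x) :
    Function.Injective (fun p : ℕ => (u ^ p) x) := by
  intro a b hab
  simp only at hab
  by_contra hne
  rcases Nat.lt_or_ge a b with hlt | hge
  · have : (u ^ a) ((u ^ (b - a)) x) = (u ^ a) x := by
      rw [← Equiv.Perm.mul_apply, ← pow_add]
      rw [show a + (b - a) = b by omega]
      exact hab.symm
    exact h (b - a) (by omega) ((u ^ a).injective this)
  · have hlt : b < a := by omega
    have : (u ^ b) ((u ^ (a - b)) x) = (u ^ b) x := by
      rw [← Equiv.Perm.mul_apply, ← pow_add]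
      rw [show b + (a - b) = a by omega]
      exact hab
    exact h (a - b) (by omega) ((u ^ b).injective this)

lemma not_infOrb {u : Equiv.Perm (XH n)} {x : XH n} (h : ¬ InfOrb u x) :
    ∃ N : ℕ, 1 ≤ N ∧ (u ^ N) x = x := by
  unfold InfOrb at h
  push_neg at h
  exact h

/-- If the orbit is infinite, iterates reach arbitrarily large heights. -/
lemma escape_forward {u : Equiv.Perm (XH n)} {x : XH n} (h : InfOrb u x) (H : ℕ) :
    ∃ p : ℕ, H < ((u ^ p) x).2 := by
  by_contra hc
  push_neg at hc
  have hsub : Set.range (fun p : ℕ => (u ^ p) x) ⊆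
      ↑((Finset.univ : Finset (Fin n)) ×ˢ Finset.range (H + 1)) := by
    rintro y ⟨p, rfl⟩
    simp only [Finset.coe_product, Set.mem_prod, Finset.mem_coe, Finset.mem_univ,
      Finset.mem_range, true_and, Finset.coe_range, Set.mem_Iio]
    have := hc p
    omega
  have hinf : (Set.range (fun p : ℕ => (u ^ p) x)).Infinite :=
    Set.infinite_range_of_injective (iterates_injective h)
  exact hinf (Set.Finite.subset (Finset.finite_toSet _) hsub)

/-- Eventually all iterates are above any given height. -/
lemma escape_all {u : Equiv.Perm (XH n)} {x : XH n} (h : InfOrb u x) (H : ℕ) :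
    ∃ P : ℕ, ∀ p : ℕ, P ≤ p → H < ((u ^ p) x).2 := by
  classical
  set Bad := {p : ℕ | ((u ^ p) x).2 ≤ H} with hBad
  have hfin : Bad.Finite := by
    apply Set.Finite.of_finite_image (f := fun p : ℕ => (u ^ p) x)
    · apply Set.Finite.subset (Finset.finite_toSet
        ((Finset.univ : Finset (Fin n)) ×ˢ Finset.range (H + 1)))
      rintro y ⟨p, hp, rfl⟩
      simp only [Finset.coe_product, Set.mem_prod, Finset.mem_coe, Finset.mem_univ,
        Finset.mem_range, true_and, Finset.coe_range, Set.mem_Iio]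
      simp only [hBad, Set.mem_setOf_eq] at hp
      omega
    · exact Function.Injective.injOn (iterates_injective h)
  obtain ⟨P₀, hP₀⟩ := hfin.bddAbove
  refine ⟨P₀ + 1, fun p hp => ?_⟩
  by_contra hc
  have : p ∈ Bad := by simp [hBad]; omega
  have := hP₀ this
  omega

/-- Iterates of a power-fixed point stay in the forward orbit. -/
lemma inv_pow_of_periodic {u : Equiv.Perm (XH n)} {x : XH n} {N : ℕ} (hN : 1 ≤ N)
    (h : (u ^ N) x = x) (p : ℕ) : ∃ k : ℕ, k < N ∧ ((u⁻¹) ^ p) x = (u ^ k) x := by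
  induction p with
  | zero => exact ⟨0, by omega, by simp⟩
  | succ p ih =>
    obtain ⟨k, hk, hkeq⟩ := ih
    have step : ((u⁻¹) ^ (p + 1)) x = u⁻¹ ((u ^ k) x) := by
      rw [pow_succ]
      show ((u⁻¹) ^ p) (u⁻¹ x) = _
      rw [← Equiv.Perm.mul_apply, ← pow_succ, pow_succ']
      show u⁻¹ (((u⁻¹) ^ p) x) = _
      rw [hkeq]
    rcases Nat.eq_zero_or_pos k with hk0 | hkpos
    · subst hk0
      refine ⟨N - 1, by omega, ?_⟩
      rw [step]
      simp only [pow_zero, Equiv.Perm.coe_one, id_eq]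
      have hNx : u ((u ^ (N - 1)) x) = x := by
        rw [← Equiv.Perm.mul_apply, ← pow_succ']
        rw [show N - 1 + 1 = N by omega]
        exact h
      apply u.injective
      simpa using hNx.symm
    · refine ⟨k - 1, by omega, ?_⟩
      rw [step]
      have : u ((u ^ (k - 1)) x) = (u ^ k) x := by
        rw [← Equiv.Perm.mul_apply, ← pow_succ']
        rw [show k - 1 + 1 = k by omega]
      rw [← this]
      simp

/-- The escape lemma: backward iterates of an infinite-orbit point eventually
climb a single ray with `m j < 0`, arithmetically. -/
lemma escapeB {u : Equiv.Perm (XH n)} {m : Fin n → ℤ} {b : ℕ} (hT : Tame u m b)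
    {x : XH n} (hx : InfOrb u x) (H : ℕ) :
    ∃ (j : Fin n) (P q0 : ℕ), m j < 0 ∧ H < q0 ∧
      ∀ d : ℕ, ((u⁻¹) ^ (P + d)) x = (j, q0 + d * (m j).natAbs) := by
  have hTv : Tame u⁻¹ (-m) (b + maxAbs m) := tame_inv hT
  have hxv : InfOrb u⁻¹ x := infOrb_inv hx
  set b₂ := b + maxAbs m with hb₂
  obtain ⟨P, hP⟩ := escape_all hxv (max b₂ H)
  set j : Fin n := (((u⁻¹) ^ P) x).1 with hjdef
  set q0 : ℕ := (((u⁻¹) ^ P) x).2 with hq0def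
  -- the iterates stay on ray j
  have hstep : ∀ d : ℕ, (((u⁻¹) ^ (P + d)) x).1 = j ∧
      ((((u⁻¹) ^ (P + d)) x).2 : ℤ) = (q0 : ℤ) + d * (-(m j)) := by
    intro d
    induction d with
    | zero =>
      rw [Nat.add_zero]
      exact ⟨rfl, by rw [hq0def]; ring⟩
    | succ d ih =>
      obtain ⟨ih1, ih2⟩ := ih
      have hgt : b₂ < (((u⁻¹) ^ (P + d)) x).2 := lt_of_le_of_lt (le_max_left _ _) (hP _ (by omega))
      have hnext : ((u⁻¹) ^ (P + (d + 1))) x = u⁻¹ (((u⁻¹) ^ (P + d)) x) := by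
        rw [show P + (d + 1) = (P + d) + 1 by omega, pow_succ']
        rfl
      have hcomp := hTv (((u⁻¹) ^ (P + d)) x).1 (((u⁻¹) ^ (P + d)) x).2 hgt
      rw [Prod.mk.eta] at hcomp
      rw [hnext]
      constructor
      · rw [hcomp.1, ih1]
      · rw [hcomp.2, ih1, ih2]
        simp only [Pi.neg_apply]
        push_cast
        ring
  -- m j < 0
  have hmj : m j < 0 := by
    by_contra hge
    push_neg at hge
    rcases lt_or_eq_of_le hge with hpos | heq0
    · -- heights would decrease forever
      have hd := (hstep (q0 + 1)).2
      have hge0 : (0 : ℤ) ≤ ((((u⁻¹) ^ (P + (q0 + 1))) x).2 : ℤ) := Int.ofNat_nonneg _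
      have h1 : ((q0 : ℤ) + 1) ≤ ((q0 : ℤ) + 1) * m j :=
        le_mul_of_one_le_right (by positivity) hpos
      push_cast at hd
      linarith
    · -- the point would be fixed
      have h1 := hstep 1
      have heq : ((u⁻¹) ^ (P + 1)) x = ((u⁻¹) ^ P) x := by
        apply Prod.ext
        · rw [h1.1]
        · have := h1.2
          rw [← heq0] at this
          simp only [neg_zero, mul_zero, add_zero] at this
          exact_mod_cast this
      exact absurd ((iterates_injective hxv) heq) (by omega)
  refine ⟨j, P, q0, hmj, lt_of_le_of_lt (le_max_right _ _) (hP P (le_refl P)), fun d => ?_⟩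
  obtain ⟨h1, h2⟩ := hstep d
  have hℓ : (((m j).natAbs : ℤ)) = -(m j) := by omega
  have h2' : (((u⁻¹) ^ (P + d)) x).2 = q0 + d * (m j).natAbs := by
    rw [← hℓ] at h2
    exact_mod_cast h2
  exact Prod.ext h1 h2'

/-- High points on a ray with nonzero translation have infinite orbit. -/
lemma pow_apply_high {w : Equiv.Perm (XH n)} {m' : Fin n → ℤ} {b' : ℕ} (hT : Tame w m' b')
    {j : Fin n} (hm : 0 < m' j) {q : ℕ} (hq : b' < q) (N : ℕ) :
    (w ^ N) (j, q) = (j, q + N * (m' j).toNat) := by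
  induction N with
  | zero => simp
  | succ N ih =>
    rw [pow_succ']
    show w ((w ^ N) (j, q)) = _
    rw [ih]
    have ht : (((m' j).toNat : ℤ)) = m' j := by omega
    apply tame_apply_eq hT (by omega)
    rw [Nat.succ_mul]
    push_cast
    omega

lemma infOrb_high {u : Equiv.Perm (XH n)} {m : Fin n → ℤ} {b : ℕ} (hT : Tame u m b)
    {j : Fin n} (hm : m j ≠ 0) {q : ℕ} (hq : b + maxAbs m < q) : InfOrb u (j, q) := by
  rcases lt_or_gt_of_ne hm with hneg | hpos
  · -- use the inverse
    intro N hN hc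
    have hTv : Tame u⁻¹ (-m) (b + maxAbs m) := tame_inv hT
    have : ((u⁻¹) ^ N) (j, q) = (j, q + N * ((-m) j).toNat) :=
      pow_apply_high hTv (by simp only [Pi.neg_apply]; omega) hq N
    have hfix : ((u⁻¹) ^ N) (j, q) = (j, q) := by
      apply (u ^ N).injective
      simp [inv_pow, hc]
    rw [hfix] at this
    have h2 := congrArg Prod.snd this
    simp only at h2
    have hpos' : 0 < ((-m) j).toNat := by simp only [Pi.neg_apply]; omega
    have := Nat.mul_pos (show 0 < N by omega) hpos'
    omega
  · intro N hN hc
    have : (u ^ N) (j, q) = (j, q + N * (m j).toNat) :=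
      pow_apply_high hT hpos (by omega) N
    rw [hc] at this
    have h2 := congrArg Prod.snd this
    simp only at h2
    have hpos' : 0 < (m j).toNat := by omega
    have := Nat.mul_pos (show 0 < N by omega) hpos'
    omega

/-! ### Zero sum of translation vectors -/

lemma maxAbs_neg (m : Fin n → ℤ) : maxAbs (-m) = maxAbs m := by
  unfold maxAbs
  apply Finset.sum_congr rfl
  intro j _
  simp

lemma out_card {u : Equiv.Perm (XH n)} {m : Fin n → ℤ} {b N : ℕ} (hT : Tame u m b)
    (hbN : b + maxAbs m < N)
    (himg : ∀ j : Fin n, ∀ q : ℕ, q ≤ b → ((u (j, q)).2) < N) :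
    (((Finset.univ : Finset (Fin n)) ×ˢ Finset.range N).filter
      (fun x => u x ∉ ((Finset.univ : Finset (Fin n)) ×ˢ Finset.range N))).card
      = ∑ j, (m j).toNat := by
  classical
  have hset : (((Finset.univ : Finset (Fin n)) ×ˢ Finset.range N).filter
      (fun x => u x ∉ ((Finset.univ : Finset (Fin n)) ×ˢ Finset.range N)))
      = Finset.univ.biUnion (fun j : Fin n =>
          (Finset.Ico (N - (m j).toNat) N).image (fun q => ((j, q) : XH n))) := by
    ext x
    obtain ⟨j, q⟩ := x
    constructor
    · intro hx
      rw [Finset.mem_filter] at hx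
      obtain ⟨hxB, hout⟩ := hx
      have hqN : q < N := by
        have := (Finset.mem_product.mp hxB).2
        simpa using this
      have hout' : N ≤ (u (j, q)).2 := by
        by_contra hlt
        exact hout (Finset.mem_product.mpr ⟨Finset.mem_univ _, Finset.mem_range.mpr (by omega)⟩)
      have habs := natAbs_le_maxAbs m j
      by_cases hqb : q ≤ b
      · exact absurd (himg j q hqb) (by omega)
      · obtain ⟨h1, h2⟩ := hT j q (by omega)
        apply Finset.mem_biUnion.mpr
        exact ⟨j, Finset.mem_univ _,
          Finset.mem_image.mpr ⟨q, Finset.mem_Ico.mpr ⟨by omega, hqN⟩, rfl⟩⟩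
    · intro hx
      obtain ⟨j', _, him⟩ := Finset.mem_biUnion.mp hx
      obtain ⟨q', hq', heq⟩ := Finset.mem_image.mp him
      obtain ⟨hlo, hhi⟩ := Finset.mem_Ico.mp hq'
      have h1 : j' = j := congrArg Prod.fst heq
      have h2 : q' = q := congrArg Prod.snd heq
      subst h1; subst h2
      have habs := natAbs_le_maxAbs m j'
      have hmpos : 0 < (m j').toNat := by omega
      have hqb : b < q' := by omega
      obtain ⟨hc1, hc2⟩ := hT j' q' hqb
      rw [Finset.mem_filter]
      refine ⟨Finset.mem_product.mpr ⟨Finset.mem_univ _, Finset.mem_range.mpr (by omega)⟩, ?_⟩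
      intro hc
      have := (Finset.mem_product.mp hc).2
      rw [Finset.mem_range] at this
      omega
  rw [hset]
  rw [Finset.card_biUnion]
  · apply Finset.sum_congr rfl
    intro j _
    rw [Finset.card_image_of_injective _ (fun a b hab => by cases hab; rfl)]
    rw [Nat.card_Ico]
    have habs := natAbs_le_maxAbs m j
    omega
  · intro a _ b' _ hab
    simp only [Finset.disjoint_left, Finset.mem_image]
    rintro x ⟨q, _, rfl⟩ ⟨q', _, heq⟩
    exact hab (by cases heq; rfl)

lemma zerosum {u : Equiv.Perm (XH n)} {m : Fin n → ℤ} {b : ℕ} (hT : Tame u m b) :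
    ∑ j, m j = 0 := by
  classical
  set b₂ := b + maxAbs m with hb₂
  have hT2 : Tame u m b₂ := tame_mono hT (by omega)
  have hTv : Tame u⁻¹ (-m) b₂ := tame_inv hT
  set low : Finset (XH n) := (Finset.univ : Finset (Fin n)) ×ˢ Finset.range (b₂ + 1) with hlow
  set B₁ := low.sup (fun x => (u x).2) with hB₁
  set B₂ := low.sup (fun x => (u⁻¹ x).2) with hB₂def
  set N := b₂ + maxAbs m + B₁ + B₂ + 1 with hN
  have hmemlow : ∀ (j : Fin n) (q : ℕ), q ≤ b₂ → ((j, q) : XH n) ∈ low := by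
    intro j q hq
    simp only [hlow, Finset.mem_product, Finset.mem_univ, Finset.mem_range, true_and]
    omega
  have himg1 : ∀ j : Fin n, ∀ q : ℕ, q ≤ b₂ → ((u (j, q)).2) < N := by
    intro j q hq
    have := Finset.le_sup (f := fun x : XH n => (u x).2) (hmemlow j q hq)
    omega
  have himg2 : ∀ j : Fin n, ∀ q : ℕ, q ≤ b₂ → ((u⁻¹ (j, q)).2) < N := by
    intro j q hq
    have := Finset.le_sup (f := fun x : XH n => (u⁻¹ x).2) (hmemlow j q hq)
    omega
  have hout := out_card hT2 (show b₂ + maxAbs m < N by omega) himg1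
  have hin := out_card hTv (show b₂ + maxAbs (-m) < N by rw [maxAbs_neg]; omega) himg2
  set Box : Finset (XH n) := (Finset.univ : Finset (Fin n)) ×ˢ Finset.range N with hBox
  -- the two filtered sets have the same cardinality
  have hA : (Box.image ⇑u).card = Box.card := Finset.card_image_of_injective _ u.injective
  have hBA : Box \ Box.image ⇑u = Box.filter (fun y => u⁻¹ y ∉ Box) := by
    ext y
    simp only [Finset.mem_sdiff, Finset.mem_filter, Finset.mem_image]
    constructor
    · rintro ⟨hy, hni⟩
      refine ⟨hy, fun hc => hni ⟨u⁻¹ y, hc, Equiv.apply_symm_apply u y⟩⟩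
    · rintro ⟨hy, hni⟩
      refine ⟨hy, ?_⟩
      rintro ⟨x, hx, rfl⟩
      simp only [Equiv.Perm.coe_inv, Equiv.symm_apply_apply] at hni
      exact hni hx
  have hAB : Box.image ⇑u \ Box = (Box.filter (fun x => u x ∉ Box)).image ⇑u := by
    ext y
    simp only [Finset.mem_sdiff, Finset.mem_image, Finset.mem_filter]
    constructor
    · rintro ⟨⟨x, hx, rfl⟩, hni⟩
      exact ⟨x, ⟨hx, hni⟩, rfl⟩
    · rintro ⟨x, ⟨hx, hni⟩, rfl⟩
      exact ⟨⟨x, hx, rfl⟩, hni⟩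
  have hcard1 : (Box \ Box.image ⇑u).card = (Box.image ⇑u \ Box).card := by
    have e1 := Finset.card_sdiff_add_card_inter Box (Box.image ⇑u)
    have e2 := Finset.card_sdiff_add_card_inter (Box.image ⇑u) Box
    rw [Finset.inter_comm] at e2
    omega
  have hkey : ∑ j, (m j).toNat = ∑ j, ((-m) j).toNat := by
    rw [← hout, ← hin]
    rw [← hBA]
    rw [hcard1, hAB]
    exact (Finset.card_image_of_injective _ u.injective).symm
  have : ∀ j : Fin n, m j = ((m j).toNat : ℤ) - (((-m) j).toNat : ℤ) := by
    intro j
    simp only [Pi.neg_apply]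
    omega
  calc ∑ j, m j = ∑ j, (((m j).toNat : ℤ) - (((-m) j).toNat : ℤ)) :=
        Finset.sum_congr rfl (fun j _ => this j)
    _ = (↑(∑ j, (m j).toNat) : ℤ) - ↑(∑ j, ((-m) j).toNat) := by
        rw [Finset.sum_sub_distrib]
        push_cast
        rfl
    _ = 0 := by rw [hkey]; ring

end HAux


namespace HAux

open Finset Equiv

section Concrete

variable {n : ℕ} (h0 : 0 < n) (i : Fin n) (hi : i ≠ ray0 n h0)

lemma g_apply_r0_zero : gGen n h0 i hi (ray0 n h0, 0) = (i, 0) := by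
  show gFun n h0 i (ray0 n h0, 0) = (i, 0)
  simp [gFun]

lemma g_apply_r0_succ (q : ℕ) : gGen n h0 i hi (ray0 n h0, q + 1) = (ray0 n h0, q) := by
  show gFun n h0 i (ray0 n h0, q + 1) = _
  simp [gFun]

lemma g_apply_rayi (q : ℕ) : gGen n h0 i hi (i, q) = (i, q + 1) := by
  show gFun n h0 i (i, q) = _
  simp [gFun, hi]

lemma g_apply_other {j : Fin n} (hj0 : j ≠ ray0 n h0) (hji : j ≠ i) (q : ℕ) :
    gGen n h0 i hi (j, q) = (j, q) := by
  show gFun n h0 i (j, q) = _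
  simp [gFun, hj0, hji]

lemma ginv_apply_r0 (q : ℕ) : (gGen n h0 i hi)⁻¹ (ray0 n h0, q) = (ray0 n h0, q + 1) := by
  show gInvFun n h0 i (ray0 n h0, q) = _
  simp [gInvFun, Ne.symm hi]

lemma gpow_r0 (N q : ℕ) : ((gGen n h0 i hi) ^ N) (ray0 n h0, q)
    = if N ≤ q then (ray0 n h0, q - N) else (i, N - q - 1) := by
  induction N with
  | zero => simp
  | succ N ih =>
    rw [pow_succ']
    show gGen n h0 i hi (((gGen n h0 i hi) ^ N) (ray0 n h0, q)) = _
    rw [ih]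
    by_cases h1 : N ≤ q
    · rw [if_pos h1]
      by_cases h2 : N + 1 ≤ q
      · rw [if_pos h2]
        have he : q - N = (q - (N + 1)) + 1 := by omega
        rw [he, g_apply_r0_succ]
      · rw [if_neg h2]
        have he : q - N = 0 := by omega
        rw [he, g_apply_r0_zero]
        have : N + 1 - q - 1 = 0 := by omega
        rw [this]
    · rw [if_neg h1, if_neg (by omega), g_apply_rayi]
      have : N + 1 - q - 1 = (N - q - 1) + 1 := by omega
      rw [this]

lemma ginvpow_r0 (p q : ℕ) :
    (((gGen n h0 i hi)⁻¹) ^ p) (ray0 n h0, q) = (ray0 n h0, q + p) := by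
  induction p with
  | zero => simp
  | succ p ih =>
    rw [pow_succ']
    show (gGen n h0 i hi)⁻¹ ((((gGen n h0 i hi)⁻¹) ^ p) (ray0 n h0, q)) = _
    rw [ih, ginv_apply_r0]
    exact congrArg (fun t => ((ray0 n h0, t) : XH n)) (by omega)

/-- The 3-cycle `(0,p) → (0,p+1) → (0,p+2) → (0,p)`. -/
def rhoP (h0 : 0 < n) (p : ℕ) : Equiv.Perm (XH n) :=
  Equiv.swap ((ray0 n h0, p) : XH n) (ray0 n h0, p + 1) *
    Equiv.swap ((ray0 n h0, p + 1) : XH n) (ray0 n h0, p + 2)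

lemma r0_ne (q q' : ℕ) (h : q ≠ q') : ((ray0 n h0, q) : XH n) ≠ (ray0 n h0, q') := by
  intro hc
  exact h (congrArg Prod.snd hc)

lemma rho_apply_a (p : ℕ) : rhoP h0 p (ray0 n h0, p) = (ray0 n h0, p + 1) := by
  unfold rhoP
  rw [Equiv.Perm.mul_apply,
    Equiv.swap_apply_of_ne_of_ne (r0_ne h0 _ _ (by omega)) (r0_ne h0 _ _ (by omega)),
    Equiv.swap_apply_left]

lemma rho_apply_b (p : ℕ) : rhoP h0 p (ray0 n h0, p + 1) = (ray0 n h0, p + 2) := by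
  unfold rhoP
  rw [Equiv.Perm.mul_apply, Equiv.swap_apply_left,
    Equiv.swap_apply_of_ne_of_ne (r0_ne h0 _ _ (by omega)) (r0_ne h0 _ _ (by omega))]

lemma rho_apply_c (p : ℕ) : rhoP h0 p (ray0 n h0, p + 2) = (ray0 n h0, p) := by
  unfold rhoP
  rw [Equiv.Perm.mul_apply, Equiv.swap_apply_right, Equiv.swap_apply_right]

lemma rho_fix (p : ℕ) {x : XH n} (ha : x ≠ (ray0 n h0, p)) (hb : x ≠ (ray0 n h0, p + 1))
    (hc : x ≠ (ray0 n h0, p + 2)) : rhoP h0 p x = x := by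
  unfold rhoP
  rw [Equiv.Perm.mul_apply, Equiv.swap_apply_of_ne_of_ne hb hc,
    Equiv.swap_apply_of_ne_of_ne ha hb]

lemma rho_supp (p : ℕ) {x : XH n} (h : rhoP h0 p x ≠ x) :
    x = (ray0 n h0, p) ∨ x = (ray0 n h0, p + 1) ∨ x = (ray0 n h0, p + 2) := by
  by_contra hc
  push_neg at hc
  exact h (rho_fix h0 p hc.1 hc.2.1 hc.2.2)

lemma rho_cube (p : ℕ) : (rhoP h0 p) ^ 3 = 1 := by
  apply Equiv.ext
  intro x
  have h3 : ((rhoP h0 p) ^ 3) x = rhoP h0 p (rhoP h0 p (rhoP h0 p x)) := by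
    rw [pow_succ, pow_succ, pow_one, Equiv.Perm.mul_apply, Equiv.Perm.mul_apply]
  rw [h3]
  simp only [Equiv.Perm.coe_one, id_eq]
  by_cases ha : x = (ray0 n h0, p)
  · rw [ha, rho_apply_a, rho_apply_b, rho_apply_c]
  · by_cases hb : x = (ray0 n h0, p + 1)
    · rw [hb, rho_apply_b, rho_apply_c, rho_apply_a]
    · by_cases hc : x = (ray0 n h0, p + 2)
      · rw [hc, rho_apply_c, rho_apply_a, rho_apply_b]
      · rw [rho_fix h0 p ha hb hc, rho_fix h0 p ha hb hc, rho_fix h0 p ha hb hc]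

lemma rho_ne_one (p : ℕ) : rhoP h0 p ≠ 1 := by
  intro hc
  have heval := Equiv.ext_iff.mp hc ((ray0 n h0, p) : XH n)
  rw [rho_apply_a] at heval
  simp only [Equiv.Perm.coe_one, id_eq] at heval
  exact r0_ne h0 _ _ (by omega) heval

lemma conj_rho (p : ℕ) :
    (gGen n h0 i hi)⁻¹ * rhoP h0 p * gGen n h0 i hi = rhoP h0 (p + 1) := by
  have e1 := ginv_apply_r0 h0 i hi p
  have e2 := ginv_apply_r0 h0 i hi (p + 1)
  have e3 := ginv_apply_r0 h0 i hi (p + 2)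
  have hkey : rhoP h0 (p + 1)
      = Equiv.swap ((gGen n h0 i hi)⁻¹ (ray0 n h0, p)) ((gGen n h0 i hi)⁻¹ (ray0 n h0, p + 1))
      * Equiv.swap ((gGen n h0 i hi)⁻¹ (ray0 n h0, p + 1))
          ((gGen n h0 i hi)⁻¹ (ray0 n h0, p + 2)) := by
    rw [e1, e2, e3]
    unfold rhoP
    norm_num
  rw [hkey, Equiv.swap_apply_apply, Equiv.swap_apply_apply, inv_inv]
  unfold rhoP
  group

lemma conj_rho_pow (p : ℕ) :
    ((gGen n h0 i hi)⁻¹) ^ p * rhoP h0 0 * (gGen n h0 i hi) ^ p = rhoP h0 p := by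
  induction p with
  | zero => simp
  | succ p ih =>
    have hstep : ((gGen n h0 i hi)⁻¹) ^ (p + 1) * rhoP h0 0 * (gGen n h0 i hi) ^ (p + 1)
        = (gGen n h0 i hi)⁻¹ * (((gGen n h0 i hi)⁻¹) ^ p * rhoP h0 0 * (gGen n h0 i hi) ^ p)
          * gGen n h0 i hi := by
      group
    rw [hstep, ih, conj_rho]

lemma g_rho_ne {N : ℕ} (hN : 1 ≤ N) :
    (gGen n h0 i hi) ^ N * rhoP h0 0 ≠ rhoP h0 0 * (gGen n h0 i hi) ^ N := by
  intro hc
  have heval := Equiv.ext_iff.mp hc ((ray0 n h0, 2) : XH n)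
  simp only [Equiv.Perm.mul_apply] at heval
  rw [show ((ray0 n h0, 2) : XH n) = (ray0 n h0, 0 + 2) by norm_num, rho_apply_c] at heval
  rw [gpow_r0, gpow_r0] at heval
  rw [if_neg (by omega)] at heval
  by_cases h1 : N ≤ 0 + 2
  · rw [if_pos (by omega)] at heval
    rcases Nat.lt_or_ge N 2 with h2 | h2
    · have hN1 : N = 1 := by omega
      subst hN1
      rw [show (0:ℕ) + 2 - 1 = 0 + 1 by norm_num, rho_apply_b] at heval
      have h5 := congrArg Prod.fst heval
      simp only at h5
      exact hi h5
    · have hN2 : N = 2 := by omega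
      subst hN2
      rw [show (0:ℕ) + 2 - 2 = 0 by norm_num, rho_apply_a] at heval
      have h5 := congrArg Prod.fst heval
      simp only at h5
      exact hi h5
  · rw [if_neg h1] at heval
    have hfix : rhoP h0 0 ((i, N - (0 + 2) - 1) : XH n) = (i, N - (0 + 2) - 1) := by
      apply rho_fix h0 0 <;> (intro hc2; exact hi (congrArg Prod.fst hc2))
    rw [hfix] at heval
    have := congrArg Prod.snd heval
    simp only at this
    omega

end Concrete

/-- If `u` fixes the support of `e` pointwise, then `u` and `e` commute. -/
lemma commute_of_fixes {α : Type*} {u e : Equiv.Perm α} (h : ∀ x, e x ≠ x → u x = x) :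
    Commute u e := by
  have hsupp : ∀ x, e x ≠ x → e (e x) ≠ e x := by
    intro x hx hc
    exact hx (e.injective hc)
  unfold Commute SemiconjBy
  ext x
  show u (e x) = e (u x)
  by_cases hx : e x = x
  · by_cases hux : e (u x) = u x
    · rw [hx, hux]
    · have h1 : u (u x) = u x := h _ hux
      have h2 : u x = x := u.injective h1
      rw [h2] at hux
      exact absurd hx hux
  · have h1 : u x = x := h x hx
    have h2 : u (e x) = e x := h _ (hsupp x hx)
    rw [h1, h2]

lemma rho_mem (h0 : 0 < n) (p : ℕ) : rhoP h0 p ∈ Houghton n :=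
  mul_mem (swap_mem_houghton _ _) (swap_mem_houghton _ _)

/-- Workhorse: asymptotic structure of backward images `((u⁻¹)^p) '' F` of a
finite set under a tame permutation. -/
lemma workhorse {n : ℕ} {u : Equiv.Perm (XH n)} {m : Fin n → ℤ} {b : ℕ}
    (hT : Tame u m b) (F : Finset (XH n)) :
    ∃ H P : ℕ,
      (∀ p : ℕ, ∀ y : XH n, y ∈ F.image ⇑((u⁻¹) ^ p) → H < y.2 → m y.1 < 0) ∧
      ((∃ x ∈ F, InfOrb u x) → ∃ j : Fin n,
        ∀ H' s₀ : ℕ, ∃ p : ℕ, s₀ ≤ p ∧ ∃ q : ℕ, H' < q ∧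
          ((j, q) : XH n) ∈ F.image ⇑((u⁻¹) ^ p)) ∧
      (∀ j : Fin n,
        (∀ H' : ℕ, ∃ p q : ℕ, H' < q ∧ ((j, q) : XH n) ∈ F.image ⇑((u⁻¹) ^ p)) →
        ((∀ H' s₀ : ℕ, ∃ p : ℕ, s₀ ≤ p ∧ ∃ q : ℕ, H' < q ∧
            ((j, q) : XH n) ∈ F.image ⇑((u⁻¹) ^ p)) ∧
         (∀ p : ℕ, P ≤ p →
          ((F.image ⇑((u⁻¹) ^ (p + 1))).filter (fun y => y.1 = j)).sup Prod.snd
            = ((F.image ⇑((u⁻¹) ^ p)).filter (fun y => y.1 = j)).sup Prod.snd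
              + (m j).natAbs))) := by
  classical
  have hdata : ∀ x : XH n, ∃ (j : Fin n) (P q0 : ℕ),
      (x ∈ F ∧ InfOrb u x) → (m j < 0 ∧ 0 < q0 ∧
        ∀ d : ℕ, ((u⁻¹) ^ (P + d)) x = (j, q0 + d * (m j).natAbs)) := by
    intro x
    by_cases hx : x ∈ F ∧ InfOrb u x
    · obtain ⟨j, P, q0, h1, h2, h3⟩ := escapeB hT hx.2 0
      exact ⟨j, P, q0, fun _ => ⟨h1, h2, h3⟩⟩
    · exact ⟨x.1, 0, 0, fun hc => absurd hc hx⟩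
  choose jx Px qx hdat using hdata
  have hper : ∀ x : XH n, ∃ B : ℕ, (x ∈ F ∧ ¬ InfOrb u x) →
      ∀ p : ℕ, (((u⁻¹) ^ p) x).2 ≤ B := by
    intro x
    by_cases hx : x ∈ F ∧ ¬ InfOrb u x
    · obtain ⟨N, hN1, hNfix⟩ := not_infOrb hx.2
      refine ⟨(Finset.range N).sup (fun k => ((u ^ k) x).2), fun _ p => ?_⟩
      obtain ⟨k, hk, hkeq⟩ := inv_pow_of_periodic hN1 hNfix p
      rw [hkeq]
      exact Finset.le_sup (f := fun k => ((u ^ k) x).2) (Finset.mem_range.mpr hk)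
    · exact ⟨0, fun hc => absurd hc hx⟩
  choose Bx hBx using hper
  set B2 : XH n → ℕ := fun x => (Finset.range (Px x)).sup (fun p => (((u⁻¹) ^ p) x).2)
    with hB2def
  set H : ℕ := F.sup (fun x => max (Bx x) (B2 x)) with hHdef
  set P : ℕ := F.sup Px + H + 1 with hPdef
  have hK1 : ∀ p : ℕ, ∀ y : XH n, y ∈ F.image ⇑((u⁻¹) ^ p) → H < y.2 →
      ∃ x : XH n, (x ∈ F ∧ InfOrb u x) ∧ Px x ≤ p ∧
        y = (jx x, qx x + (p - Px x) * (m (jx x)).natAbs) := by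
    intro p y hy hHy
    obtain ⟨x, hxF, rfl⟩ := Finset.mem_image.mp hy
    by_cases hio : InfOrb u x
    · by_cases hp : Px x ≤ p
      · refine ⟨x, ⟨hxF, hio⟩, hp, ?_⟩
        have hf := (hdat x ⟨hxF, hio⟩).2.2 (p - Px x)
        rw [show Px x + (p - Px x) = p by omega] at hf
        exact hf
      · exfalso
        have h1 : (((u⁻¹) ^ p) x).2 ≤ B2 x :=
          Finset.le_sup (f := fun p => (((u⁻¹) ^ p) x).2) (Finset.mem_range.mpr (by omega))
        have h2 : max (Bx x) (B2 x) ≤ H :=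
          Finset.le_sup (f := fun x => max (Bx x) (B2 x)) hxF
        omega
    · exfalso
      have h1 := hBx x ⟨hxF, hio⟩ p
      have h2 : max (Bx x) (B2 x) ≤ H :=
        Finset.le_sup (f := fun x => max (Bx x) (B2 x)) hxF
      omega
  have hW1 : ∀ p : ℕ, ∀ y : XH n, y ∈ F.image ⇑((u⁻¹) ^ p) → H < y.2 → m y.1 < 0 := by
    intro p y hy hHy
    obtain ⟨x, hx, _, rfl⟩ := hK1 p y hy hHy
    exact (hdat x hx).1
  have hstrong : ∀ x : XH n, x ∈ F → InfOrb u x →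
      ∀ H' s₀ : ℕ, ∃ p : ℕ, s₀ ≤ p ∧ ∃ q : ℕ, H' < q ∧
        ((jx x, q) : XH n) ∈ F.image ⇑((u⁻¹) ^ p) := by
    intro x hxF hio H' s₀
    obtain ⟨hneg, hq0, hform⟩ := hdat x ⟨hxF, hio⟩
    set d := H' + s₀ with hddef
    refine ⟨Px x + d, by omega, qx x + d * (m (jx x)).natAbs, ?_, ?_⟩
    · have h1 : 1 ≤ (m (jx x)).natAbs := by omega
      have h2 : d * 1 ≤ d * (m (jx x)).natAbs := Nat.mul_le_mul_left _ h1
      rw [mul_one] at h2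
      omega
    · exact Finset.mem_image.mpr ⟨x, hxF, hform d⟩
  refine ⟨H, P, hW1, ?_, ?_⟩
  · rintro ⟨x, hxF, hio⟩
    exact ⟨jx x, hstrong x hxF hio⟩
  · intro j hj
    have hfind : ∃ x : XH n, x ∈ F ∧ InfOrb u x ∧ jx x = j := by
      obtain ⟨p, q, hq, hmem⟩ := hj H
      obtain ⟨x, hx, hpx, heq⟩ := hK1 p (j, q) hmem hq
      exact ⟨x, hx.1, hx.2, (congrArg Prod.fst heq).symm⟩
    obtain ⟨x₀, hx₀F, hx₀io, hjx₀⟩ := hfind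
    constructor
    · intro H' s₀
      rw [← hjx₀]
      exact hstrong x₀ hx₀F hx₀io H' s₀
    · intro p hp
      set ℓ := (m j).natAbs with hldef
      have hl1 : 1 ≤ ℓ := by
        have := (hdat x₀ ⟨hx₀F, hx₀io⟩).1
        rw [hjx₀] at this
        omega
      set Ej := F.filter (fun x => InfOrb u x ∧ jx x = j) with hEjdef
      have hx₀Ej : x₀ ∈ Ej := Finset.mem_filter.mpr ⟨hx₀F, hx₀io, hjx₀⟩
      have hEjne : Ej.Nonempty := ⟨x₀, hx₀Ej⟩
      have hMp : ∀ r : ℕ, P ≤ r → H < Ej.sup (fun x => qx x + (r - Px x) * ℓ) := by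
        intro r hr
        have hPx₀ : Px x₀ ≤ F.sup Px := Finset.le_sup (f := Px) hx₀F
        have h1 : qx x₀ + (r - Px x₀) * ℓ ≤ Ej.sup (fun x => qx x + (r - Px x) * ℓ) :=
          Finset.le_sup (f := fun x => qx x + (r - Px x) * ℓ) hx₀Ej
        have h2 : 0 < qx x₀ := (hdat x₀ ⟨hx₀F, hx₀io⟩).2.1
        have h4 : (r - Px x₀) * 1 ≤ (r - Px x₀) * ℓ := Nat.mul_le_mul_left _ hl1
        rw [mul_one] at h4
        omega
      have hval : ∀ r : ℕ, P ≤ r →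
          ((F.image ⇑((u⁻¹) ^ r)).filter (fun y => y.1 = j)).sup Prod.snd
          = Ej.sup (fun x => qx x + (r - Px x) * ℓ) := by
        intro r hr
        apply le_antisymm
        · apply Finset.sup_le
          intro y hy
          rw [Finset.mem_filter] at hy
          obtain ⟨hy1, hy2⟩ := hy
          by_cases hHy : H < y.2
          · obtain ⟨x, hx, hpx, heq⟩ := hK1 r y hy1 hHy
            have hjxx : jx x = j := by rw [← hy2, heq]
            have hxEj : x ∈ Ej := Finset.mem_filter.mpr ⟨hx.1, hx.2, hjxx⟩
            have hy2' : y.2 = qx x + (r - Px x) * ℓ := by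
              rw [heq]
              simp only
              rw [hjxx]
            rw [hy2']
            exact Finset.le_sup (f := fun x => qx x + (r - Px x) * ℓ) hxEj
          · have := hMp r hr
            omega
        · apply Finset.sup_le
          intro x hx
          rw [hEjdef, Finset.mem_filter] at hx
          obtain ⟨hxF, hio, hjxx⟩ := hx
          have hPxr : Px x ≤ r := by
            have : Px x ≤ F.sup Px := Finset.le_sup (f := Px) hxF
            omega
          have hform := (hdat x ⟨hxF, hio⟩).2.2 (r - Px x)
          rw [show Px x + (r - Px x) = r by omega] at hform
          have hmem : ((jx x, qx x + (r - Px x) * (m (jx x)).natAbs) : XH n)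
              ∈ (F.image ⇑((u⁻¹) ^ r)).filter (fun y => y.1 = j) := by
            rw [Finset.mem_filter]
            exact ⟨Finset.mem_image.mpr ⟨x, hxF, hform⟩, hjxx⟩
          have hle := Finset.le_sup (f := Prod.snd) hmem
          simp only at hle
          rw [hjxx] at hle
          exact hle
      rw [hval p hp, hval (p + 1) (by omega)]
      have hcongr : Ej.sup (fun x => qx x + (p + 1 - Px x) * ℓ)
          = Ej.sup (fun x => (qx x + (p - Px x) * ℓ) + ℓ) := by
        apply Finset.sup_congr rfl
        intro x hx
        have hPxx : Px x ≤ p := by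
          have : Px x ≤ F.sup Px := Finset.le_sup (f := Px) (Finset.mem_filter.mp hx).1
          omega
        rw [show p + 1 - Px x = (p - Px x) + 1 by omega, Nat.succ_mul]
        ring
      rw [hcongr]
      apply le_antisymm
      · apply Finset.sup_le
        intro x hx
        have hb := Finset.le_sup (f := fun x => qx x + (p - Px x) * ℓ) hx
        omega
      · obtain ⟨x, hx, hxe⟩ := Finset.exists_mem_eq_sup Ej hEjne
          (fun x => qx x + (p - Px x) * ℓ)
        rw [hxe]
        exact Finset.le_sup (f := fun x => (qx x + (p - Px x) * ℓ) + ℓ) hx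

end HAux


/-- For `n ≥ 2` and any injective endomorphism `φ` of `H_n`, there
are a positive integer `ℓ` and an injective map `δ` of the ray indices such
that `π(φ(g_i)) = ℓ·e_{δ(i)} − ℓ·e_{δ(1)}` for every `i ∈ {2, …, n}`: each
`φ(g_i)` acts off a finite set as translation by `−ℓ` on the common source ray
`R_{δ(1)}`, by `+ℓ` on its target ray `R_{δ(i)}`, and trivially elsewhere. -/
theorem monomorphism_translation_vectors
    (n : ℕ) (hn : 2 ≤ n) (h0 : 0 < n)
    (φ : Houghton n →* Houghton n) (hφ : Function.Injective φ) :
    ∃ (ℓ : ℕ) (δ : Fin n → Fin n), 1 ≤ ℓ ∧ Function.Injective δ ∧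
      ∀ (i : Fin n) (hi : i ≠ ray0 n h0),
        HasTranslationVector (imageGen h0 φ i hi)
          (fun j => (ℓ : ℤ) *
            ((if j = δ i then 1 else 0) - (if j = δ (ray0 n h0) then 1 else 0))) := by
  classical
  set i₁ : Fin n := ⟨1, by omega⟩ with hi₁def
  have hi₁ : i₁ ≠ ray0 n h0 := by
    intro hc
    have := congrArg Fin.val hc
    simp [hi₁def, ray0] at this
  -- images of the generators as permutations
  set a : ∀ i : Fin n, i ≠ ray0 n h0 → Equiv.Perm (XH n) :=
    fun i hi => ((φ (hGen n h0 i hi) : Houghton n) : Equiv.Perm (XH n)) with hadef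
  have hIE : ∀ g : Houghton n,
      IsEventualTranslation ((φ g : Houghton n) : Equiv.Perm (XH n)) := fun g => (φ g).2
  have hTexists : ∀ (i : Fin n) (hi : i ≠ ray0 n h0),
      ∃ (mv : Fin n → ℤ) (b : ℕ), HAux.Tame (a i hi) mv b := by
    intro i hi
    obtain ⟨mv, hmv⟩ := hIE (hGen n h0 i hi)
    obtain ⟨b, hb⟩ := HAux.tame_of_htv hmv
    exact ⟨mv, b, hb⟩
  choose m bb hmb using hTexists
  -- the image of the basic 3-cycle
  set ρH : ℕ → Houghton n := fun p => ⟨HAux.rhoP h0 p, HAux.rho_mem h0 p⟩ with hρHdef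
  set c : Equiv.Perm (XH n) := ((φ (ρH 0) : Houghton n) : Equiv.Perm (XH n)) with hcdef
  have hρ3 : ∀ p, (ρH p) ^ 3 = 1 := by
    intro p
    apply Subtype.ext
    simp only [SubmonoidClass.coe_pow, OneMemClass.coe_one, hρHdef]
    exact HAux.rho_cube h0 p
  have hc3 : c ^ 3 = 1 := by
    rw [hcdef, ← SubmonoidClass.coe_pow, ← map_pow, hρ3 0, map_one, OneMemClass.coe_one]
  obtain ⟨mc, hmcK⟩ := hIE (ρH 0)
  obtain ⟨bc, hbc⟩ := HAux.tame_of_htv hmcK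
  have hc0 : HAux.Tame c 0 bc := HAux.tame_zero_of_cube hbc hc3
  set F : Finset (XH n) :=
    ((Finset.univ : Finset (Fin n)) ×ˢ Finset.range (bc + 1)).filter (fun x => c x ≠ x)
    with hFdef
  have hFiff : ∀ x : XH n, x ∈ F ↔ c x ≠ x := by
    intro x
    rw [hFdef, Finset.mem_filter]
    constructor
    · exact fun h => h.2
    · intro h
      refine ⟨?_, h⟩
      rw [Finset.mem_product]
      refine ⟨Finset.mem_univ _, Finset.mem_range.mpr ?_⟩
      by_contra hb
      exact h (HAux.tame_fix hc0 (by omega))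
  -- conjugation identities
  have hconjH : ∀ (i : Fin n) (hi : i ≠ ray0 n h0) (p : ℕ),
      ((a i hi)⁻¹) ^ p * c * (a i hi) ^ p
        = ((φ (ρH p) : Houghton n) : Equiv.Perm (XH n)) := by
    intro i hi p
    have hH : ((hGen n h0 i hi)⁻¹) ^ p * ρH 0 * (hGen n h0 i hi) ^ p = ρH p := by
      apply Subtype.ext
      simp only [Subgroup.coe_mul, SubmonoidClass.coe_pow, InvMemClass.coe_inv, hρHdef]
      exact HAux.conj_rho_pow h0 i hi p
    rw [← hH, map_mul, map_mul, map_pow, map_pow, map_inv]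
    simp only [Subgroup.coe_mul, SubmonoidClass.coe_pow, InvMemClass.coe_inv, hadef, hcdef]
  have hmemim : ∀ (i : Fin n) (hi : i ≠ ray0 n h0) (p : ℕ) (y : XH n),
      y ∈ F.image ⇑(((a i hi)⁻¹) ^ p) ↔
        ((φ (ρH p) : Houghton n) : Equiv.Perm (XH n)) y ≠ y := by
    intro i hi p y
    rw [← hconjH i hi p]
    have hap : ∀ z : XH n, ((a i hi) ^ p) ((((a i hi)⁻¹) ^ p) z) = z := by
      intro z
      rw [inv_pow]
      exact Equiv.apply_symm_apply _ z
    have hpa : ∀ z : XH n, (((a i hi)⁻¹) ^ p) (((a i hi) ^ p) z) = z := by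
      intro z
      rw [inv_pow]
      exact Equiv.symm_apply_apply _ z
    have happly : ∀ z : XH n, (((a i hi)⁻¹) ^ p * c * (a i hi) ^ p) z
        = (((a i hi)⁻¹) ^ p) (c (((a i hi) ^ p) z)) := fun z => rfl
    constructor
    · intro hy hc2
      obtain ⟨x, hxF, rfl⟩ := Finset.mem_image.mp hy
      rw [happly, hap] at hc2
      exact ((hFiff x).mp hxF) ((((a i hi)⁻¹) ^ p).injective hc2)
    · intro hne
      rw [happly] at hne
      refine Finset.mem_image.mpr ⟨((a i hi) ^ p) y, ?_, hpa y⟩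
      rw [hFiff]
      intro hc2
      exact hne (by rw [hc2, hpa])
  have hSSeq : ∀ (i : Fin n) (hi : i ≠ ray0 n h0) (i' : Fin n) (hi' : i' ≠ ray0 n h0) (p : ℕ),
      F.image ⇑(((a i hi)⁻¹) ^ p) = F.image ⇑(((a i' hi')⁻¹) ^ p) := by
    intro i hi i' hi' p
    ext y
    rw [hmemim i hi p y, hmemim i' hi' p y]
  have hmemim2 : ∀ (i : Fin n) (hi : i ≠ ray0 n h0) (s : ℕ) (y : XH n),
      y ∈ F.image ⇑((a i hi) ^ s) ↔
        ((a i hi) ^ s * c * ((a i hi)⁻¹) ^ s) y ≠ y := by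
    intro i hi s y
    have hap : ∀ z : XH n, ((a i hi) ^ s) ((((a i hi)⁻¹) ^ s) z) = z := by
      intro z
      rw [inv_pow]
      exact Equiv.apply_symm_apply _ z
    have hpa : ∀ z : XH n, (((a i hi)⁻¹) ^ s) (((a i hi) ^ s) z) = z := by
      intro z
      rw [inv_pow]
      exact Equiv.symm_apply_apply _ z
    have happly : ∀ z : XH n, ((a i hi) ^ s * c * ((a i hi)⁻¹) ^ s) z
        = ((a i hi) ^ s) (c ((((a i hi)⁻¹) ^ s) z)) := fun z => rfl
    constructor
    · intro hy hc2
      obtain ⟨x, hxF, rfl⟩ := Finset.mem_image.mp hy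
      rw [happly, hpa] at hc2
      exact ((hFiff x).mp hxF) ((((a i hi)) ^ s).injective hc2)
    · intro hne
      rw [happly] at hne
      refine Finset.mem_image.mpr ⟨(((a i hi)⁻¹) ^ s) y, ?_, hap y⟩
      rw [hFiff]
      intro hc2
      exact hne (by rw [hc2, hap])
  -- every generator moves some point of F on an infinite orbit
  have hEsc : ∀ (i : Fin n) (hi : i ≠ ray0 n h0), ∃ x ∈ F, HAux.InfOrb (a i hi) x := by
    intro i hi
    by_contra hall
    push_neg at hall
    have hperiod : ∀ x : XH n, ∃ N : ℕ, 1 ≤ N ∧ (x ∈ F → ((a i hi) ^ N) x = x) := by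
      intro x
      by_cases hx : x ∈ F
      · obtain ⟨N, hN1, hNfix⟩ := HAux.not_infOrb (hall x hx)
        exact ⟨N, hN1, fun _ => hNfix⟩
      · exact ⟨1, le_refl 1, fun hc => absurd hc hx⟩
    choose Nx hNx using hperiod
    set N : ℕ := F.prod Nx with hNdef
    have hN1 : 1 ≤ N := Finset.one_le_prod' (fun x _ => (hNx x).1)
    have hfixN : ∀ x ∈ F, ((a i hi) ^ N) x = x := by
      intro x hx
      obtain ⟨k, hk⟩ := Finset.dvd_prod_of_mem Nx hx
      rw [hNdef, hk]
      exact HAux.pow_fix_of_pow ((hNx x).2 hx) k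
    have hcomm : Commute ((a i hi) ^ N) c :=
      HAux.commute_of_fixes (fun x hx => hfixN x ((hFiff x).mpr hx))
    have hφeq : φ ((hGen n h0 i hi) ^ N * ρH 0) = φ (ρH 0 * (hGen n h0 i hi) ^ N) := by
      apply Subtype.ext
      rw [map_mul, map_mul, map_pow]
      simp only [Subgroup.coe_mul, SubmonoidClass.coe_pow]
      exact hcomm
    have hval := congrArg Subtype.val (hφ hφeq)
    simp only [Subgroup.coe_mul, SubmonoidClass.coe_pow, hρHdef] at hval
    exact HAux.g_rho_ne h0 i hi hN1 hval
  -- workhorse data, backward and forward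
  have hWbex : ∀ (i : Fin n) (hi : i ≠ ray0 n h0), ∃ H P : ℕ, _ :=
    fun i hi => HAux.workhorse (hmb i hi) F
  choose Hb Pb hWb using hWbex
  have hWfex : ∀ (i : Fin n) (hi : i ≠ ray0 n h0), ∃ H P : ℕ, _ :=
    fun i hi => HAux.workhorse (HAux.tame_inv (hmb i hi)) F
  choose Hf Pf hWf using hWfex
  -- the sets of active rays
  set Tb : Finset (Fin n) := Finset.univ.filter (fun j => ∀ H' : ℕ, ∃ p q : ℕ, H' < q ∧
      ((j, q) : XH n) ∈ F.image ⇑(((a i₁ hi₁)⁻¹) ^ p)) with hTbdef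
  set Rf : ∀ (i : Fin n), i ≠ ray0 n h0 → Finset (Fin n) := fun i hi =>
    Finset.univ.filter (fun t => ∀ H' : ℕ, ∃ s q : ℕ, 3 ≤ s ∧ H' < q ∧
      ((t, q) : XH n) ∈ F.image ⇑((a i hi) ^ s)) with hRfdef
  have hTbmem : ∀ (i : Fin n) (hi : i ≠ ray0 n h0) (j : Fin n), j ∈ Tb →
      ∀ H' : ℕ, ∃ p q : ℕ, H' < q ∧ ((j, q) : XH n) ∈ F.image ⇑(((a i hi)⁻¹) ^ p) := by
    intro i hi j hj H'
    rw [hTbdef, Finset.mem_filter] at hj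
    obtain ⟨p, q, hq, hmem⟩ := hj.2 H'
    rw [hSSeq i₁ hi₁ i hi p] at hmem
    exact ⟨p, q, hq, hmem⟩
  have hTbne : Tb.Nonempty := by
    obtain ⟨j, hstr⟩ := (hWb i₁ hi₁).2.1 (hEsc i₁ hi₁)
    refine ⟨j, Finset.mem_filter.mpr ⟨Finset.mem_univ _, fun H' => ?_⟩⟩
    obtain ⟨p, _, q, hq, hmem⟩ := hstr H' 0
    exact ⟨p, q, hq, hmem⟩
  have hTbneg : ∀ (i : Fin n) (hi : i ≠ ray0 n h0), ∀ j ∈ Tb, (m i hi) j < 0 := by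
    intro i hi j hj
    obtain ⟨p, q, hq, hmem⟩ := hTbmem i hi j hj (Hb i hi)
    exact (hWb i hi).1 p (j, q) hmem hq
  have hspeed : ∀ (i : Fin n) (hi : i ≠ ray0 n h0) (i' : Fin n) (hi' : i' ≠ ray0 n h0),
      ∀ j ∈ Tb, (m i hi) j = (m i' hi') j := by
    intro i hi i' hi' j hj
    set p : ℕ := max (Pb i hi) (Pb i' hi') with hpdef
    have h1 := ((hWb i hi).2.2 j (hTbmem i hi j hj)).2 p (le_max_left _ _)
    have h2 := ((hWb i' hi').2.2 j (hTbmem i' hi' j hj)).2 p (le_max_right _ _)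
    rw [hSSeq i hi i₁ hi₁ (p + 1), hSSeq i hi i₁ hi₁ p] at h1
    rw [hSSeq i' hi' i₁ hi₁ (p + 1), hSSeq i' hi' i₁ hi₁ p] at h2
    have habs : ((m i hi) j).natAbs = ((m i' hi') j).natAbs := by omega
    have hn1 := hTbneg i hi j hj
    have hn2 := hTbneg i' hi' j hj
    omega
  have hRfne : ∀ (i : Fin n) (hi : i ≠ ray0 n h0), (Rf i hi).Nonempty := by
    intro i hi
    have hesc' : ∃ x ∈ F, HAux.InfOrb ((a i hi)⁻¹) x := by
      obtain ⟨x, hxF, hio⟩ := hEsc i hi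
      exact ⟨x, hxF, HAux.infOrb_inv hio⟩
    obtain ⟨j, hstr⟩ := (hWf i hi).2.1 hesc'
    simp only [inv_inv] at hstr
    refine ⟨j, Finset.mem_filter.mpr ⟨Finset.mem_univ _, fun H' => ?_⟩⟩
    obtain ⟨s, hs3, q, hq, hmem⟩ := hstr H' 3
    exact ⟨s, q, hs3, hq, hmem⟩
  have hRfpos : ∀ (i : Fin n) (hi : i ≠ ray0 n h0), ∀ t ∈ Rf i hi, 0 < (m i hi) t := by
    intro i hi t ht
    rw [hRfdef, Finset.mem_filter] at ht
    obtain ⟨s, q, hs3, hq, hmem⟩ := ht.2 (Hf i hi)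
    have hW1 := (hWf i hi).1
    simp only [inv_inv] at hW1
    have := hW1 s (t, q) hmem hq
    simp only [Pi.neg_apply] at this
    omega
  -- rays active for one generator are inert for the others
  have hRfzero : ∀ (i : Fin n) (hi : i ≠ ray0 n h0) (j' : Fin n) (hj' : j' ≠ ray0 n h0),
      j' ≠ i → ∀ t ∈ Rf i hi, (m j' hj') t = 0 := by
    intro i hi j' hj' hji t ht
    by_contra hne
    rw [hRfdef, Finset.mem_filter] at ht
    obtain ⟨s, q, hs3, hq, hmem⟩ := ht.2 (bb j' hj' + HAux.maxAbs (m j' hj'))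
    have hInf : HAux.InfOrb (a j' hj') (t, q) := HAux.infOrb_high (hmb j' hj') hne hq
    set e : Equiv.Perm (XH n) := (a i hi) ^ s * c * ((a i hi)⁻¹) ^ s with hedef
    have he : e (t, q) ≠ (t, q) := (hmemim2 i hi s (t, q)).mp hmem
    -- the generator j' commutes with e
    have hsupp : ∀ x : XH n,
        ((gGen n h0 i hi) ^ s * HAux.rhoP h0 0 * ((gGen n h0 i hi)⁻¹) ^ s) x ≠ x →
        gGen n h0 j' hj' x = x := by
      intro x hx
      have h1 : HAux.rhoP h0 0 ((((gGen n h0 i hi)⁻¹) ^ s) x)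
          ≠ (((gGen n h0 i hi)⁻¹) ^ s) x := by
        intro hcx
        apply hx
        show ((gGen n h0 i hi) ^ s)
          (HAux.rhoP h0 0 ((((gGen n h0 i hi)⁻¹) ^ s) x)) = x
        rw [hcx, inv_pow]
        exact Equiv.apply_symm_apply _ x
      have h2 := HAux.rho_supp h0 0 h1
      have hxeq : ∃ k : ℕ, k < 3 ∧ x = ((gGen n h0 i hi) ^ s) ((ray0 n h0, k) : XH n) := by
        have hback : ∀ w : XH n, (((gGen n h0 i hi)⁻¹) ^ s) x = w →
            x = ((gGen n h0 i hi) ^ s) w := by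
          intro w hw
          rw [← hw, inv_pow]
          exact (Equiv.apply_symm_apply _ x).symm
        rcases h2 with h | h | h
        · exact ⟨0, by omega, hback _ h⟩
        · exact ⟨0 + 1, by omega, hback _ h⟩
        · exact ⟨0 + 2, by omega, hback _ h⟩
      obtain ⟨k, hk3, hxk⟩ := hxeq
      rw [hxk, HAux.gpow_r0, if_neg (by omega)]
      exact HAux.g_apply_other h0 j' hj' hi (Ne.symm hji) _
    have hcommH : Commute (hGen n h0 j' hj')
        ((hGen n h0 i hi) ^ s * ρH 0 * ((hGen n h0 i hi)⁻¹) ^ s) := by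
      unfold Commute SemiconjBy
      apply Subtype.ext
      simp only [Subgroup.coe_mul, SubmonoidClass.coe_pow, InvMemClass.coe_inv, hρHdef]
      exact HAux.commute_of_fixes hsupp
    have hγ : ((φ ((hGen n h0 i hi) ^ s * ρH 0 * ((hGen n h0 i hi)⁻¹) ^ s) : Houghton n)
        : Equiv.Perm (XH n)) = e := by
      rw [map_mul, map_mul, map_pow, map_pow, map_inv]
      simp only [Subgroup.coe_mul, SubmonoidClass.coe_pow, InvMemClass.coe_inv,
        hadef, hcdef, hedef]
    have hcommP : Commute (a j' hj') e := by
      unfold Commute SemiconjBy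
      have hφc := (hcommH.map φ)
      unfold Commute SemiconjBy at hφc
      have hval := congrArg Subtype.val hφc
      simp only [Subgroup.coe_mul] at hval
      rw [hγ] at hval
      exact hval
    have hiter : ∀ k : ℕ, e (((a j' hj') ^ k) (t, q)) ≠ ((a j' hj') ^ k) (t, q) := by
      intro k
      induction k with
      | zero => simpa using he
      | succ k ih =>
        rw [pow_succ']
        show e ((a j' hj') (((a j' hj') ^ k) (t, q)))
          ≠ (a j' hj') (((a j' hj') ^ k) (t, q))
        have hpt := Equiv.ext_iff.mp hcommP (((a j' hj') ^ k) (t, q))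
        simp only [Equiv.Perm.mul_apply] at hpt
        rw [← hpt]
        intro hcx
        exact ih ((a j' hj').injective hcx)
    have hγ3 : ((hGen n h0 i hi) ^ s * ρH 0 * ((hGen n h0 i hi)⁻¹) ^ s) ^ 3 = 1 := by
      have h1 : ∀ w r : Houghton n, (w * r * w⁻¹) ^ 3 = w * r ^ 3 * w⁻¹ := by
        intro w r
        rw [pow_succ, pow_succ, pow_one, pow_succ, pow_succ, pow_one]
        group
      rw [inv_pow, h1, hρ3 0, mul_one, mul_inv_cancel]
    have he3 : e ^ 3 = 1 := by
      rw [← hγ, ← SubmonoidClass.coe_pow, ← map_pow, hγ3, map_one, OneMemClass.coe_one]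
    obtain ⟨me, hmeK⟩ := hIE ((hGen n h0 i hi) ^ s * ρH 0 * ((hGen n h0 i hi)⁻¹) ^ s)
    obtain ⟨be, hbe⟩ := HAux.tame_of_htv hmeK
    rw [hγ] at hbe
    have hTe : HAux.Tame e 0 be := HAux.tame_zero_of_cube hbe he3
    obtain ⟨k, hk⟩ := HAux.escape_forward hInf be
    exact hiter k (HAux.tame_fix hTe hk)
  -- choose the target rays
  have hδex : ∀ r : Fin n, ∃ d : Fin n,
      (r = ray0 n h0 → d ∈ Tb) ∧ (∀ hr : r ≠ ray0 n h0, d ∈ Rf r hr) := by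
    intro r
    by_cases h : r = ray0 n h0
    · obtain ⟨d, hd⟩ := hTbne
      exact ⟨d, fun _ => hd, fun hr => absurd h hr⟩
    · obtain ⟨d, hd⟩ := hRfne r h
      exact ⟨d, fun hc => absurd hc h, fun _ => hd⟩
  choose δ hδTb hδRf using hδex
  have hδ0Tb : δ (ray0 n h0) ∈ Tb := hδTb (ray0 n h0) rfl
  have hδrRf : ∀ (r : Fin n) (hr : r ≠ ray0 n h0), δ r ∈ Rf r hr := hδRf
  have hδinj : Function.Injective δ := by
    intro r r' heq
    by_contra hne
    by_cases h1 : r = ray0 n h0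
    · have htb := hδTb r h1
      have h2 : r' ≠ ray0 n h0 := fun hc => hne (h1.trans hc.symm)
      have hrf := hδRf r' h2
      have hneg := hTbneg r' h2 _ htb
      have hpos := hRfpos r' h2 _ hrf
      rw [heq] at hneg
      omega
    · have hrf := hδRf r h1
      by_cases h2 : r' = ray0 n h0
      · have htb := hδTb r' h2
        have hneg := hTbneg r h1 _ htb
        have hpos := hRfpos r h1 _ hrf
        rw [← heq] at hneg
        omega
      · have hrf' := hδRf r' h2
        have hz := hRfzero r h1 r' h2 (fun hc => hne hc.symm) _ hrf
        have hp := hRfpos r' h2 _ hrf'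
        rw [← heq] at hp
        omega
  have hδsurj : Function.Surjective δ := Finite.injective_iff_surjective.mp hδinj
  set ℓ : ℕ := ((m i₁ hi₁) (δ (ray0 n h0))).natAbs with hldef
  have hl1 : 1 ≤ ℓ := by
    have := hTbneg i₁ hi₁ _ hδ0Tb
    omega
  have hmδ0 : ∀ (i : Fin n) (hi : i ≠ ray0 n h0), (m i hi) (δ (ray0 n h0)) = -(ℓ : ℤ) := by
    intro i hi
    have h1 := hspeed i hi i₁ hi₁ _ hδ0Tb
    have h2 := hTbneg i hi _ hδ0Tb
    omega
  have hmδr : ∀ (i : Fin n) (hi : i ≠ ray0 n h0) (r : Fin n) (hr : r ≠ ray0 n h0),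
      r ≠ i → (m i hi) (δ r) = 0 := by
    intro i hi r hr hri
    exact hRfzero r hr i hi (fun hc => hri hc.symm) _ (hδrRf r hr)
  have hmδi : ∀ (i : Fin n) (hi : i ≠ ray0 n h0), (m i hi) (δ i) = (ℓ : ℤ) := by
    intro i hi
    have hsum : ∑ j, (m i hi) j = 0 := HAux.zerosum (hmb i hi)
    have hre : ∑ j : Fin n, (m i hi) j = ∑ r : Fin n, (m i hi) (δ r) :=
      (Fintype.sum_bijective δ (Finite.injective_iff_bijective.mp hδinj) _ _
        (fun r => rfl)).symm
    have hsplit : ∀ r : Fin n, (m i hi) (δ r)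
        = (if r = i then (m i hi) (δ i) else 0)
          + (if r = ray0 n h0 then -(ℓ : ℤ) else 0) := by
      intro r
      by_cases h1 : r = i
      · subst h1
        rw [if_pos rfl, if_neg hi, add_zero]
      · rw [if_neg h1]
        by_cases h2 : r = ray0 n h0
        · subst h2
          rw [if_pos rfl, zero_add]
          exact hmδ0 i hi
        · rw [if_neg h2, add_zero]
          exact hmδr i hi r h2 h1
    rw [hre, Finset.sum_congr rfl (fun r _ => hsplit r), Finset.sum_add_distrib] at hsum
    simp only [Finset.sum_ite_eq', Finset.mem_univ, if_true] at hsum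
    omega
  refine ⟨ℓ, δ, hl1, hδinj, ?_⟩
  intro i hi
  have hvec : ∀ j : Fin n, (m i hi) j
      = (ℓ : ℤ) * ((if j = δ i then 1 else 0) - (if j = δ (ray0 n h0) then 1 else 0)) := by
    intro j
    obtain ⟨r, rfl⟩ := hδsurj j
    by_cases h1 : r = i
    · subst h1
      rw [if_pos rfl, if_neg (fun hc => hi (hδinj hc)), hmδi r hi]
      ring
    · by_cases h2 : r = ray0 n h0
      · subst h2
        rw [if_neg (fun hc => h1 (hδinj hc)), if_pos rfl, hmδ0 i hi]
        ring
      · rw [if_neg (fun hc => h1 (hδinj hc)), if_neg (fun hc => h2 (hδinj hc)),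
          hmδr i hi r h2 h1]
        ring
  show HasTranslationVector (a i hi) _
  refine ⟨(Finset.univ : Finset (Fin n)) ×ˢ Finset.range (bb i hi + 1), ?_⟩
  intro x hx
  have hx2 : bb i hi < x.2 := by
    by_contra hc
    exact hx (Finset.mem_product.mpr ⟨Finset.mem_univ _, Finset.mem_range.mpr (by omega)⟩)
  have hcomp := hmb i hi x.1 x.2 hx2
  simp only [Prod.mk.eta] at hcomp
  refine ⟨hcomp.1, ?_⟩
  rw [hcomp.2]
  congr 1
  exact hvec x.1
end
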